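/- arXiv:1601.06064 — 9 statements merged into one kernel-verified Lean document; each statement's English description precedes it below -/
import Mathlib

section
/- For every integer K ≥ 2 and every z in the ordered simplex ∇_K, one has ∑_{l=1}^K (1−z_l)^K ≥ (K/2)·e^{−2}. -/
open Finset

/-- The function `r(u)`: `r(u) = (1-u)(1-(1-u)^K)/u` for `u > 0`, `r(0) = K`. -/
noncomputable def rfun (K : ℕ) (u : ℝ) : ℝ :=
  if u = 0 then (K : ℝ) else (1 - u) * (1 - (1 - u) ^ K) / u

/-- The simplex `Δ_K`. -/
def DeltaK (K : ℕ) : Set (Fin K → ℝ) :=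
  {z | (∀ i, 0 ≤ z i) ∧ ∑ i, z i = 1}

/-- The ordered simplex `∇_K`. -/
def NablaK (K : ℕ) : Set (Fin K → ℝ) :=
  {z | z ∈ DeltaK K ∧ ∀ i j : Fin K, i ≤ j → z j ≤ z i}

/-- The mainland frequencies `p_i(z)`. -/
noncomputable def pfun (K : ℕ) (z : Fin K → ℝ) (i : Fin K) : ℝ :=
  (1 - z i) ^ K / ∑ l, (1 - z l) ^ K

/-- The drift coefficients `b_i(z)`. -/
noncomputable def bdrift (K : ℕ) (α θ : ℝ) (z : Fin K → ℝ) (i : Fin K) : ℝ :=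
  (1 / 2) * ((θ + α) * (1 - z i) / ((K : ℝ) - 1) - (θ + α) * z i
    + α * pfun K z i * (∑ j, z j * rfun K (z j)) - α * z i * rfun K (z i))

/-- The power sum `φ_m(z) = ∑_{i=1}^K z_i^m` (real exponent). -/
noncomputable def phiK (K : ℕ) (m : ℝ) (z : Fin K → ℝ) : ℝ := ∑ i, z i ^ m

/-- The generator applied to the power sum `φ_m`:
`B_K φ_m(z) = (m(m-1)/2) ∑ z_i^{m-1}(1-z_i) + m ∑ b_i(z) z_i^{m-1}`. -/
noncomputable def BKphi (K : ℕ) (α θ : ℝ) (m : ℝ) (z : Fin K → ℝ) : ℝ :=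
  (m * (m - 1) / 2) * ∑ i, z i ^ (m - 1) * (1 - z i)
    + m * ∑ i, bdrift K α θ z i * z i ^ (m - 1)

/-- For every integer `K ≥ 2` and every `z` in the ordered simplex `∇_K`,
one has `∑_{l=1}^K (1-z_l)^K ≥ (K/2)·e^{-2}`. -/
theorem stmt2 (K : ℕ) (hK : 2 ≤ K) :
    ∀ z ∈ NablaK K, (K : ℝ) / 2 * Real.exp (-2) ≤ ∑ l, (1 - z l) ^ K := by
  intro z hz
  obtain ⟨⟨hpos, hsum⟩, -⟩ := hz
  have hKpos : (0:ℝ) < K := by exact_mod_cast Nat.lt_of_lt_of_le (by norm_num) hK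
  have hK2 : (2:ℝ) ≤ K := by exact_mod_cast hK
  have hzle : ∀ i, z i ≤ 1 := by
    intro i
    calc z i ≤ ∑ j, z j := Finset.single_le_sum (fun j _ => hpos j) (Finset.mem_univ i)
      _ = 1 := hsum
  have hnn : ∀ i ∈ Finset.univ, (0:ℝ) ≤ 1 - z i := fun i _ => by linarith [hzle i]
  have hsum' : ∑ l, (1 - z l) = (K:ℝ) - 1 := by
    rw [Finset.sum_sub_distrib, hsum]
    simp
  have hJ := pow_sum_div_card_le_sum_pow (f := fun l => 1 - z l) hnn (K - 1)
  have hKe : K - 1 + 1 = K := Nat.sub_add_cancel (by omega)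
  rw [hKe, hsum', Finset.card_univ, Fintype.card_fin] at hJ
  refine le_trans ?_ hJ
  have hK1 : (0:ℝ) ≤ (K:ℝ) - 1 := by linarith
  have hfracnn : (0:ℝ) ≤ ((K:ℝ)-1)/K := div_nonneg hK1 hKpos.le
  have h2 : (1:ℝ) + 2/K ≤ Real.exp (2/(K:ℝ)) := by
    have := Real.add_one_le_exp (2/(K:ℝ)); linarith
  have h1 : Real.exp (-(2/(K:ℝ))) ≤ ((K:ℝ)-1)/K := by
    have ha : (2/(K:ℝ)) * K = 2 := by field_simp
    have ha1 : 2/(K:ℝ) ≤ 1 := by rw [div_le_one hKpos]; linarith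
    have hfracpos : (0:ℝ) < ((K:ℝ)-1)/K := div_pos (by linarith) hKpos
    rw [Real.exp_neg, inv_le_comm₀ (Real.exp_pos _) hfracpos, inv_div]
    refine le_trans ?_ h2
    rw [div_le_iff₀ (by linarith)]
    nlinarith [ha, ha1]
  have hexp : Real.exp (-2) ≤ (((K:ℝ)-1)/K) ^ K := by
    have : Real.exp (-2) = (Real.exp (-(2/(K:ℝ)))) ^ K := by
      rw [← Real.exp_nat_mul]
      congr 1
      field_simp
    rw [this]
    exact pow_le_pow_left₀ (Real.exp_pos _).le h1 K
  have hKK : ((K:ℝ))^K = (K:ℝ)^(K-1) * K := by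
    rw [← pow_succ, hKe]
  calc (K:ℝ)/2 * Real.exp (-2) ≤ (K:ℝ)/2 * ((((K:ℝ)-1)/K)^K) :=
        mul_le_mul_of_nonneg_left hexp (by positivity)
    _ ≤ (K:ℝ) * ((((K:ℝ)-1)/K)^K) :=
        mul_le_mul_of_nonneg_right (by linarith) (pow_nonneg hfracnn K)
    _ = ((K:ℝ)-1)^K / (K:ℝ)^(K-1) := by
        rw [div_pow, hKK]
        field_simp
end

section
/- For every integer K ≥ 2 and every z ∈ ∇_K, one has ∑_{j=1}^K z_j r_j(z) ≤ K, and consequently (∑_{j=1}^K z_j r_j(z)) / (∑_{l=1}^K (1−z_l)^K) ≤ 2e². -/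
open Finset

lemma mul_rfun (K : ℕ) (u : ℝ) : u * rfun K u = (1 - u) * (1 - (1 - u) ^ K) := by
  rcases eq_or_ne u 0 with h | h
  · simp [rfun, h]
  · simp only [rfun, if_neg h]
    field_simp

lemma exp_neg_two_mul_le {z : ℝ} (h0 : 0 ≤ z) (h : z ≤ 1/2) :
    Real.exp (-(2*z)) ≤ 1 - z := by
  have h1 : (1:ℝ) + 2*z ≤ Real.exp (2*z) := by
    have := Real.add_one_le_exp (2*z); linarith
  have key : 1 ≤ (1 - z) * Real.exp (2*z) := by
    nlinarith [mul_le_mul_of_nonneg_left h1 (show (0:ℝ) ≤ 1 - z by linarith)]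
  have hp : (0:ℝ) < Real.exp (2*z) := Real.exp_pos _
  have hmul : Real.exp (-(2*z)) * Real.exp (2*z) = 1 := by
    rw [← Real.exp_add]; simp
  have : Real.exp (-(2*z)) * Real.exp (2*z) ≤ (1 - z) * Real.exp (2*z) := by
    rw [hmul]; exact key
  exact le_of_mul_le_mul_right this hp

lemma exp_pow_bound (K : ℕ) {z : ℝ} (h0 : 0 ≤ z) (h : z ≤ 1/2) :
    Real.exp (-(2*K*z)) ≤ (1 - z)^K := by
  have he : Real.exp (-(2*K*z)) = (Real.exp (-(2*z)))^K := by
    rw [← Real.exp_nat_mul]; ring_nf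
  rw [he]
  exact pow_le_pow_left₀ (Real.exp_nonneg _) (exp_neg_two_mul_le h0 h) K


/-- For every integer `K ≥ 2` and every `z ∈ ∇_K`, one has
`∑_{j=1}^K z_j r_j(z) ≤ K`, and consequently
`(∑_{j=1}^K z_j r_j(z)) / (∑_{l=1}^K (1-z_l)^K) ≤ 2e²`. -/
theorem stmt3 (K : ℕ) (hK : 2 ≤ K) :
    ∀ z ∈ NablaK K,
      (∑ j, z j * rfun K (z j)) ≤ (K : ℝ) ∧
      (∑ j, z j * rfun K (z j)) / (∑ l, (1 - z l) ^ K) ≤ 2 * Real.exp 2 := by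
  intro z hz
  obtain ⟨⟨hnn, hsum⟩, hmono⟩ := hz
  have hK1 : (2:ℝ) ≤ (K:ℝ) := by exact_mod_cast hK
  have hle1 : ∀ j : Fin K, z j ≤ 1 := by
    intro j
    have h := Finset.single_le_sum (f := z) (fun i _ => hnn i) (mem_univ j)
    rw [hsum] at h; exact h
  have hPnn : ∀ j : Fin K, 0 ≤ (1 - z j)^K := fun j => pow_nonneg (by linarith [hle1 j]) _
  have hPle : ∀ j : Fin K, (1 - z j)^K ≤ 1 := fun j =>
    pow_le_one₀ (by linarith [hle1 j]) (by linarith [hnn j])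
  have hterm1 : ∀ j : Fin K, z j * rfun K (z j) ≤ 1 := by
    intro j
    rw [mul_rfun]
    nlinarith [hPnn j, hPle j, hnn j, hle1 j]
  have hBern : ∀ j : Fin K, 1 - (K:ℝ) * z j ≤ (1 - z j)^K := by
    intro j
    have := one_add_mul_le_pow (a := -z j) (by linarith [hle1 j] : (-2:ℝ) ≤ -z j) K
    calc 1 - (K:ℝ) * z j = 1 + (K:ℝ) * (-z j) := by ring
    _ ≤ (1 + -z j)^K := this
    _ = (1 - z j)^K := by ring_nf
  have htermK : ∀ j : Fin K, z j * rfun K (z j) ≤ (K:ℝ) * z j := by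
    intro j
    rw [mul_rfun]
    nlinarith [hBern j, hnn j, hle1 j, hPnn j, hPle j]
  have part1 : (∑ j, z j * rfun K (z j)) ≤ (K : ℝ) := by
    calc (∑ j, z j * rfun K (z j)) ≤ ∑ _j : Fin K, (1:ℝ) :=
          Finset.sum_le_sum (fun j _ => hterm1 j)
    _ = K := by simp
  refine ⟨part1, ?_⟩
  set N := ∑ j, z j * rfun K (z j) with hN
  set D := ∑ l, (1 - z l)^K with hD
  obtain ⟨i0, hi0⟩ : ∃ i : Fin K, (i : ℕ) = 0 := ⟨⟨0, by omega⟩, rfl⟩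
  by_cases hz0 : z i0 ≤ 1/2
  · -- all coordinates ≤ 1/2
    have hall : ∀ i : Fin K, z i ≤ 1/2 := by
      intro i
      have : z i ≤ z i0 := hmono i0 i (by rw [Fin.le_def, hi0]; exact Nat.zero_le _)
      linarith
    have htan : ∀ i : Fin K, Real.exp (-2) * (3 - 2*(K:ℝ)*z i) ≤ (1 - z i)^K := by
      intro i
      have h1 : 1 + (2 - 2*(K:ℝ)*z i) ≤ Real.exp (2 - 2*(K:ℝ)*z i) := by
        linarith [Real.add_one_le_exp (2 - 2*(K:ℝ)*z i)]
      have h2 : Real.exp (-2) * Real.exp (2 - 2*(K:ℝ)*z i) = Real.exp (-(2*(K:ℝ)*z i)) := by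
        rw [← Real.exp_add]; ring_nf
      have h3 : Real.exp (-2) * (3 - 2*(K:ℝ)*z i) ≤ Real.exp (-(2*(K:ℝ)*z i)) := by
        rw [← h2]
        have := mul_le_mul_of_nonneg_left h1 (Real.exp_nonneg (-2))
        calc Real.exp (-2) * (3 - 2*(K:ℝ)*z i)
            = Real.exp (-2) * (1 + (2 - 2*(K:ℝ)*z i)) := by ring
        _ ≤ Real.exp (-2) * Real.exp (2 - 2*(K:ℝ)*z i) := this
      exact h3.trans (exp_pow_bound K (hnn i) (hall i))
    have hDlow : (K:ℝ) * Real.exp (-2) ≤ D := by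
      have hsum2 : ∑ i : Fin K, Real.exp (-2) * (3 - 2*(K:ℝ)*z i) = (K:ℝ) * Real.exp (-2) := by
        rw [← Finset.mul_sum, Finset.sum_sub_distrib, Finset.sum_const, ← Finset.mul_sum, hsum]
        simp [Finset.card_univ]
        ring
      rw [← hsum2]
      exact Finset.sum_le_sum (fun i _ => htan i)
    have hDpos : 0 < D := lt_of_lt_of_le (by positivity) hDlow
    rw [div_le_iff₀ hDpos]
    have hE : Real.exp 2 * Real.exp (-2) = 1 := by
      rw [← Real.exp_add]; norm_num
    nlinarith [mul_le_mul_of_nonneg_left hDlow (Real.exp_nonneg 2), Real.exp_pos 2, hDpos]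
  · -- z i0 > 1/2
    push_neg at hz0
    set s : ℝ := ∑ i ∈ univ.erase i0, z i with hs
    have hsplit : z i0 + s = 1 := by
      rw [hs, Finset.add_sum_erase _ z (mem_univ i0), hsum]
    have hsnn : 0 ≤ s := Finset.sum_nonneg (fun i _ => hnn i)
    have hshalf : s ≤ 1/2 := by linarith
    have hzles : ∀ i ∈ univ.erase i0, z i ≤ s := by
      intro i hi
      exact Finset.single_le_sum (f := z) (fun j _ => hnn j) hi
    -- numerator bound
    have hNle : N ≤ ((K:ℝ) + 1) * s := by
      have h0 : z i0 * rfun K (z i0) ≤ s := by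
        rw [mul_rfun]
        nlinarith [hPnn i0, hPle i0, hnn i0, hle1 i0]
      have hrest : ∑ i ∈ univ.erase i0, z i * rfun K (z i) ≤ (K:ℝ) * s := by
        calc ∑ i ∈ univ.erase i0, z i * rfun K (z i) ≤ ∑ i ∈ univ.erase i0, (K:ℝ) * z i :=
              Finset.sum_le_sum (fun i _ => htermK i)
        _ = (K:ℝ) * s := by rw [← Finset.mul_sum]
      have hNsplit : N = z i0 * rfun K (z i0) + ∑ i ∈ univ.erase i0, z i * rfun K (z i) := by
        rw [hN]
        exact (Finset.add_sum_erase univ (fun j => z j * rfun K (z j)) (mem_univ i0)).symm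
      rw [hNsplit]; linarith
    -- denominator bound
    set c : ℝ := 2*(K:ℝ)*s/((K:ℝ) - 1) with hc
    have hKm : (1:ℝ) ≤ (K:ℝ) - 1 := by linarith
    have hcnn : 0 ≤ c := by
      apply div_nonneg (by positivity) (by linarith)
    have hcle2 : c ≤ 2 := by
      rw [hc, div_le_iff₀ (by linarith : (0:ℝ) < (K:ℝ) - 1)]
      nlinarith
    have htan : ∀ i ∈ univ.erase i0, Real.exp (-c) * (1 + c - 2*(K:ℝ)*z i) ≤ (1 - z i)^K := by
      intro i hi
      have hzi : z i ≤ 1/2 := le_trans (hzles i hi) hshalf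
      have h1 : 1 + (c - 2*(K:ℝ)*z i) ≤ Real.exp (c - 2*(K:ℝ)*z i) := by
        linarith [Real.add_one_le_exp (c - 2*(K:ℝ)*z i)]
      have h2 : Real.exp (-c) * Real.exp (c - 2*(K:ℝ)*z i) = Real.exp (-(2*(K:ℝ)*z i)) := by
        rw [← Real.exp_add]; ring_nf
      have h3 : Real.exp (-c) * (1 + c - 2*(K:ℝ)*z i) ≤ Real.exp (-(2*(K:ℝ)*z i)) := by
        rw [← h2]
        have := mul_le_mul_of_nonneg_left h1 (Real.exp_nonneg (-c))
        calc Real.exp (-c) * (1 + c - 2*(K:ℝ)*z i)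
            = Real.exp (-c) * (1 + (c - 2*(K:ℝ)*z i)) := by ring
        _ ≤ Real.exp (-c) * Real.exp (c - 2*(K:ℝ)*z i) := this
      exact h3.trans (exp_pow_bound K (hnn i) hzi)
    have hcard : ((univ.erase i0).card : ℝ) = (K:ℝ) - 1 := by
      rw [Finset.card_erase_of_mem (mem_univ i0), Finset.card_univ, Fintype.card_fin]
      have : (1:ℕ) ≤ K := by omega
      push_cast [Nat.cast_sub this]
      ring
    have hDlow : ((K:ℝ) - 1) * Real.exp (-c) ≤ D := by
      have hcval : ((K:ℝ) - 1) * c = 2*(K:ℝ)*s := by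
        rw [hc]; field_simp
      have hsum2 : ∑ i ∈ univ.erase i0, Real.exp (-c) * (1 + c - 2*(K:ℝ)*z i)
          = ((K:ℝ) - 1) * Real.exp (-c) := by
        have hinner : ∑ i ∈ univ.erase i0, (1 + c - 2*(K:ℝ)*z i) = (K:ℝ) - 1 := by
          rw [Finset.sum_sub_distrib, Finset.sum_const, ← Finset.mul_sum, ← hs,
            nsmul_eq_mul, hcard]
          nlinarith [hcval]
        rw [← Finset.mul_sum, hinner]; ring
      have h1 : ∑ i ∈ univ.erase i0, Real.exp (-c) * (1 + c - 2*(K:ℝ)*z i)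
          ≤ ∑ i ∈ univ.erase i0, (1 - z i)^K := Finset.sum_le_sum htan
      have h2 : ∑ i ∈ univ.erase i0, (1 - z i)^K ≤ D := by
        rw [hD]
        exact Finset.sum_le_sum_of_subset_of_nonneg (Finset.subset_univ _)
          (fun i _ _ => hPnn i)
      linarith [hsum2 ▸ h1]
    have hDpos : 0 < D := lt_of_lt_of_le (by positivity) hDlow
    rw [div_le_iff₀ hDpos]
    have hE : Real.exp 2 * Real.exp (-c) = Real.exp (2 - c) := by
      rw [← Real.exp_add]; ring_nf
    have hE1 : 1 ≤ Real.exp (2 - c) := Real.one_le_exp (by linarith)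
    nlinarith [mul_le_mul_of_nonneg_left hDlow (Real.exp_nonneg 2), Real.exp_pos 2,
      Real.exp_pos (-c), hDpos, hNle, hshalf, hsnn, hK1]
end

section
/- For every real m ≥ 2 and every z ∈ Δ_K, the generator applied to the power sum φ_m satisfies the identity B_K φ_m(z) = (m(m−1)/2)(φ_{m−1}(z) − φ_m(z)) + (m/2)·((θ+α)/(K−1))·(φ_{m−1}(z) − φ_m(z)) − (m/2)(θ φ_m(z) + α φ_{m−1}(z)) + (m/2)·α·∑_{i=1}^K (1−z_i)^K z_i^{m−1}·(1 − z_i + (∑_{j=1}^K z_j r_j(z))/(∑_{l=1}^K (1−z_l)^K)). -/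
open Finset

lemma rpow_mul_self {x : ℝ} (hx : 0 ≤ x) {m : ℝ} (hm : 2 ≤ m) :
    x ^ (m - 1) * x = x ^ m := by
  rcases hx.eq_or_lt with h | h
  · rw [← h, Real.zero_rpow (by intro h'; nlinarith : m - 1 ≠ 0),
      Real.zero_rpow (by intro h'; nlinarith : m ≠ 0), zero_mul]
  · rw [← Real.rpow_add_one h.ne', sub_add_cancel]

/-- For every real `m ≥ 2` and every `z ∈ Δ_K`, the generator applied to
the power sum `φ_m` satisfies the stated identity. -/
theorem stmt5 (K : ℕ) (hK : 2 ≤ K) (α θ : ℝ) (hα0 : 0 ≤ α) (hα1 : α < 1)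
    (hθ : -α < θ) :
    ∀ (m : ℝ), 2 ≤ m → ∀ z ∈ DeltaK K,
      BKphi K α θ m z =
        (m * (m - 1) / 2) * (phiK K (m - 1) z - phiK K m z)
          + (m / 2) * ((θ + α) / ((K : ℝ) - 1)) * (phiK K (m - 1) z - phiK K m z)
          - (m / 2) * (θ * phiK K m z + α * phiK K (m - 1) z)
          + (m / 2) * α * ∑ i, (1 - z i) ^ K * z i ^ (m - 1) *
              (1 - z i + (∑ j, z j * rfun K (z j)) / (∑ l, (1 - z l) ^ K)) := by
  intro m hm z hz
  obtain ⟨hz0, _⟩ := hz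
  rw [← sub_eq_zero]
  simp only [BKphi, phiK, bdrift, pfun]
  set S := ∑ j, z j * rfun K (z j) with hS
  set D := ∑ l, (1 - z l) ^ K with hD
  simp only [Finset.mul_sum, ← Finset.sum_sub_distrib,
    ← Finset.sum_add_distrib]
  refine Finset.sum_eq_zero fun i _ => ?_
  have hw : z i ^ (m - 1) * z i = z i ^ m := rpow_mul_self (hz0 i) hm
  have hr : z i * rfun K (z i) = (1 - z i) * (1 - (1 - z i) ^ K) := mul_rfun K (z i)
  rw [← hw]
  linear_combination (-(m / 2) * α * (z i ^ (m - 1))) * hr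
end

section
/- For every real m ≥ 2 and every z ∈ ∇̄_∞, the series (1/2)∑_{i=1}^∞ z_i(1−z_i)·m(m−1)z_i^{m−2} − (1/2)∑_{i=1}^∞ (θ z_i + α)·m z_i^{m−1} (which is the operator B of the two-parameter model applied to φ_m, the mixed second partial derivatives of φ_m being zero) converges and equals (m(m−1)/2)(φ_{m−1}(z) − φ_m(z)) − (m/2)(θ φ_m(z) + α φ_{m−1}(z)). In particular, for m = 2 and every z ∈ ∇_∞ (where ∑_{i=1}^∞ z_i = 1), B φ_2(z) = 1 − α − (1+θ) φ_2(z). -/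
open Finset

/-- The Kingman simplex `∇̄_∞` (coordinates indexed by `ℕ`). -/
def KingmanSimplex : Set (ℕ → ℝ) :=
  {z | (∀ i, 0 ≤ z i) ∧ (∀ i, z i ≤ 1) ∧ (∀ i j : ℕ, i ≤ j → z j ≤ z i) ∧
       Summable z ∧ ∑' i, z i ≤ 1}

/-- The power sum `φ_m(z) = ∑_{i=1}^∞ z_i^m` (real exponent). -/
noncomputable def phiInf (m : ℝ) (z : ℕ → ℝ) : ℝ := ∑' i, z i ^ m

lemma kingman_summable_rpow {z : ℕ → ℝ} (hz : z ∈ KingmanSimplex) {p : ℝ} (hp : 1 ≤ p) :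
    Summable (fun i : ℕ => z i ^ p) := by
  obtain ⟨h0, h1, -, hsum, -⟩ := hz
  refine Summable.of_nonneg_of_le (fun i => Real.rpow_nonneg (h0 i) p) (fun i => ?_) hsum
  rcases eq_or_lt_of_le (h0 i) with h | h
  · rw [← h, Real.zero_rpow (by linarith)]
  · calc z i ^ p ≤ z i ^ (1 : ℝ) := Real.rpow_le_rpow_of_exponent_ge h (h1 i) hp
    _ = z i := Real.rpow_one _

lemma key_part1 (α θ : ℝ) (m : ℝ) (hm : 2 ≤ m) (z : ℕ → ℝ) (hz : z ∈ KingmanSimplex) :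
      Summable (fun i : ℕ => (1 / 2) * (z i * (1 - z i)) * (m * (m - 1) * z i ^ (m - 2))) ∧
      Summable (fun i : ℕ => (1 / 2) * (θ * z i + α) * (m * z i ^ (m - 1))) ∧
      (∑' i : ℕ, (1 / 2) * (z i * (1 - z i)) * (m * (m - 1) * z i ^ (m - 2)))
          - (∑' i : ℕ, (1 / 2) * (θ * z i + α) * (m * z i ^ (m - 1)))
        = (m * (m - 1) / 2) * (phiInf (m - 1) z - phiInf m z)
          - (m / 2) * (θ * phiInf m z + α * phiInf (m - 1) z) := by
  have h0 := hz.1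
  have S1 : Summable (fun i : ℕ => z i ^ (m - 1)) := kingman_summable_rpow hz (by linarith)
  have S2 : Summable (fun i : ℕ => z i ^ m) := kingman_summable_rpow hz (by linarith)
  have e1 : ∀ i : ℕ, (1 / 2) * (z i * (1 - z i)) * (m * (m - 1) * z i ^ (m - 2))
      = (m * (m - 1) / 2) * z i ^ (m - 1) - (m * (m - 1) / 2) * z i ^ m := by
    intro i
    rcases eq_or_lt_of_le (h0 i) with h | h
    · rw [← h]
      rw [Real.zero_rpow (by linarith : m - 1 ≠ 0), Real.zero_rpow (by linarith : m ≠ 0)]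
      ring
    · have hne : z i ≠ 0 := ne_of_gt h
      have a1 : z i ^ (m - 1) = z i ^ (m - 2) * z i := by
        rw [← Real.rpow_add_one hne]; ring_nf
      have a2 : z i ^ m = z i ^ (m - 1) * z i := by
        rw [← Real.rpow_add_one hne]; ring_nf
      rw [a1, a2, a1]; ring
  have e2 : ∀ i : ℕ, (1 / 2) * (θ * z i + α) * (m * z i ^ (m - 1))
      = (m / 2 * θ) * z i ^ m + (m / 2 * α) * z i ^ (m - 1) := by
    intro i
    rcases eq_or_lt_of_le (h0 i) with h | h
    · rw [← h]
      rw [Real.zero_rpow (by linarith : m - 1 ≠ 0), Real.zero_rpow (by linarith : m ≠ 0)]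
      ring
    · have hne : z i ≠ 0 := ne_of_gt h
      have a2 : z i ^ m = z i ^ (m - 1) * z i := by
        rw [← Real.rpow_add_one hne]; ring_nf
      rw [a2]; ring
  have Sa : Summable (fun i : ℕ => (1 / 2) * (z i * (1 - z i)) * (m * (m - 1) * z i ^ (m - 2))) := by
    have := ((S1.mul_left (m * (m - 1) / 2)).sub (S2.mul_left (m * (m - 1) / 2)))
    exact this.congr fun i => (e1 i).symm
  have Sb : Summable (fun i : ℕ => (1 / 2) * (θ * z i + α) * (m * z i ^ (m - 1))) := by
    have := ((S2.mul_left (m / 2 * θ)).add (S1.mul_left (m / 2 * α)))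
    exact this.congr fun i => (e2 i).symm
  refine ⟨Sa, Sb, ?_⟩
  rw [tsum_congr e1, tsum_congr e2,
    Summable.tsum_sub (S1.mul_left _) (S2.mul_left _),
    Summable.tsum_add (S2.mul_left _) (S1.mul_left _),
    tsum_mul_left, tsum_mul_left, tsum_mul_left, tsum_mul_left]
  unfold phiInf
  ring

/-- For every real `m ≥ 2` and every `z ∈ ∇̄_∞`, the two series defining
`B φ_m(z)` converge and their difference equals
`(m(m-1)/2)(φ_{m-1}(z) − φ_m(z)) − (m/2)(θφ_m(z) + αφ_{m-1}(z))`.  In particular,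
for `m = 2` and `z ∈ ∇_∞`, `B φ_2(z) = 1 − α − (1+θ)φ_2(z)`. -/
theorem stmt7 (α θ : ℝ) (hα0 : 0 ≤ α) (hα1 : α < 1) (hθ : -α < θ) :
    (∀ (m : ℝ), 2 ≤ m → ∀ z ∈ KingmanSimplex,
      Summable (fun i : ℕ => (1 / 2) * (z i * (1 - z i)) * (m * (m - 1) * z i ^ (m - 2))) ∧
      Summable (fun i : ℕ => (1 / 2) * (θ * z i + α) * (m * z i ^ (m - 1))) ∧
      (∑' i : ℕ, (1 / 2) * (z i * (1 - z i)) * (m * (m - 1) * z i ^ (m - 2)))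
          - (∑' i : ℕ, (1 / 2) * (θ * z i + α) * (m * z i ^ (m - 1)))
        = (m * (m - 1) / 2) * (phiInf (m - 1) z - phiInf m z)
          - (m / 2) * (θ * phiInf m z + α * phiInf (m - 1) z)) ∧
    (∀ z ∈ KingmanSimplex, (∑' i, z i) = 1 →
      (∑' i : ℕ, (1 / 2) * (z i * (1 - z i)) * (2 * (2 - 1) * z i ^ ((2 : ℝ) - 2)))
          - (∑' i : ℕ, (1 / 2) * (θ * z i + α) * (2 * z i ^ ((2 : ℝ) - 1)))
        = 1 - α - (1 + θ) * phiInf 2 z) := by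
  refine ⟨fun m hm z hz => key_part1 α θ m hm z hz, fun z hz hsum1 => ?_⟩
  have h := (key_part1 α θ 2 le_rfl z hz).2.2
  have hphi1 : phiInf ((2:ℝ) - 1) z = 1 := by
    unfold phiInf
    rw [show (2:ℝ) - 1 = 1 by norm_num]
    simpa [Real.rpow_one] using hsum1
  rw [h, hphi1]
  ring
end

section
/- For every real m ≥ 2, every integer K ≥ 2, and every z ∈ ∇_K, one has |B_K φ_m(z) − [(m(m−1)/2)(φ_{m−1}(z) − φ_m(z)) − (m/2)(θ φ_m(z) + α φ_{m−1}(z))]| ≤ (m/2)·(θ+α)/(K−1) + (m/2)·α·(1+2e²)·K·((m−1)/(K+m−1))^{m−1}. In particular, for fixed ε ∈ (0,1) and m ≥ 2+ε, the supremum over z ∈ ∇_K of this difference is O(K^{−ε}) as K → ∞. -/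
open Finset

/-- Key pointwise bound: `z^a (1-z)^K ≤ (a/(a+K))^a` for `z ∈ [0,1]`, `a ≥ 1`. -/
lemma geom_bound (a : ℝ) (K : ℕ) (ha : 1 ≤ a) (hK : 1 ≤ K) {z : ℝ} (h0 : 0 ≤ z) (h1 : z ≤ 1) :
    z ^ a * (1 - z) ^ K ≤ (a / (a + K)) ^ a := by
  have ha0 : 0 < a := lt_of_lt_of_le one_pos ha
  have hs : (0:ℝ) < a + K := by positivity
  have hRnn : (0:ℝ) ≤ (a / (a + K)) ^ a := Real.rpow_nonneg (by positivity) a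
  rcases eq_or_lt_of_le h0 with h0' | h0'
  · rw [← h0', Real.zero_rpow (ne_of_gt ha0), zero_mul]; exact hRnn
  rcases eq_or_lt_of_le h1 with h1' | h1'
  · rw [h1', sub_self, zero_pow (by omega), mul_zero]; exact hRnn
  set w₁ : ℝ := a / (a + K) with hw₁
  set w₂ : ℝ := (K:ℝ) / (a + K) with hw₂
  have hw₁0 : 0 < w₁ := by positivity
  have hw₂0 : 0 < w₂ := by positivity
  have hwsum : w₁ + w₂ = 1 := by rw [hw₁, hw₂]; field_simp
  set p₁ : ℝ := z / w₁ with hp₁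
  set p₂ : ℝ := (1 - z) / w₂ with hp₂
  have hp₁0 : 0 ≤ p₁ := by positivity
  have hp₂0 : 0 ≤ p₂ := div_nonneg (by linarith) hw₂0.le
  have hY : p₁ ^ w₁ * p₂ ^ w₂ ≤ 1 := by
    have := Real.geom_mean_le_arith_mean2_weighted hw₁0.le hw₂0.le hp₁0 hp₂0 hwsum
    calc p₁ ^ w₁ * p₂ ^ w₂ ≤ w₁ * p₁ + w₂ * p₂ := this
    _ = 1 := by rw [hp₁, hp₂]; field_simp; ring
  have hYnn : 0 ≤ p₁ ^ w₁ * p₂ ^ w₂ :=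
    mul_nonneg (Real.rpow_nonneg hp₁0 _) (Real.rpow_nonneg hp₂0 _)
  have hX : (p₁ ^ w₁ * p₂ ^ w₂) ^ (a + (K:ℝ)) ≤ 1 := Real.rpow_le_one hYnn hY (by positivity)
  have hXeq : (p₁ ^ w₁ * p₂ ^ w₂) ^ (a + (K:ℝ)) = p₁ ^ a * p₂ ^ K := by
    rw [Real.mul_rpow (Real.rpow_nonneg hp₁0 _) (Real.rpow_nonneg hp₂0 _),
      ← Real.rpow_natCast p₂ K, ← Real.rpow_mul hp₁0, ← Real.rpow_mul hp₂0]
    congr 1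
    · congr 1; rw [hw₁]; field_simp
    · congr 1; rw [hw₂]; field_simp
  have hz1 : z = w₁ * p₁ := by rw [hp₁]; field_simp
  have hz2 : (1 - z) = w₂ * p₂ := by rw [hp₂]; field_simp
  calc z ^ a * (1 - z) ^ K = (w₁ * p₁) ^ a * (w₂ * p₂) ^ K := by rw [← hz1, ← hz2]
    _ = (w₁ ^ a * w₂ ^ K) * (p₁ ^ a * p₂ ^ K) := by
        rw [Real.mul_rpow hw₁0.le hp₁0, mul_pow]; ring
    _ ≤ (w₁ ^ a * w₂ ^ K) * 1 := by
        refine mul_le_mul_of_nonneg_left ?_ (by positivity)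
        rw [← hXeq]; exact hX
    _ ≤ w₁ ^ a * 1 := by
        rw [mul_one]
        refine mul_le_mul_of_nonneg_left ?_ (Real.rpow_nonneg hw₁0.le a)
        exact pow_le_one₀ hw₂0.le (by rw [hw₂, div_le_one hs]; linarith)
    _ = (a / (a + K)) ^ a := by rw [mul_one]

lemma denom_bound (K : ℕ) (hK : 2 ≤ K) : Real.exp (-2) ≤ (((K:ℝ) - 1) / K) ^ K := by
  have hK2 : (2:ℝ) ≤ (K:ℝ) := by exact_mod_cast hK
  have hK1pos : (0:ℝ) < (K:ℝ) - 1 := by linarith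
  have hKpos : (0:ℝ) < K := by linarith
  have h1 : Real.exp (-(1/((K:ℝ)-1))) ≤ ((K:ℝ)-1)/K := by
    rw [Real.exp_neg, inv_le_comm₀ (Real.exp_pos _) (by positivity), inv_div]
    have h2 := Real.add_one_le_exp (1/((K:ℝ)-1))
    have h3 : (K:ℝ)/((K:ℝ)-1) = 1/((K:ℝ)-1) + 1 := by field_simp; ring
    linarith
  calc Real.exp (-2) ≤ Real.exp ((K:ℝ) * (-(1/((K:ℝ)-1)))) := by
        apply Real.exp_le_exp.2
        rw [mul_neg, neg_le_neg_iff, mul_one_div, div_le_iff₀ hK1pos]; linarith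
    _ = Real.exp (-(1/((K:ℝ)-1))) ^ K := by
        rw [← Real.exp_nat_mul]
    _ ≤ (((K:ℝ) - 1) / K) ^ K := pow_le_pow_left₀ (Real.exp_pos _).le h1 K

set_option maxHeartbeats 1000000 in
lemma part1 (α θ : ℝ) (hα0 : 0 ≤ α) (hθ : -α < θ) (m : ℝ) (hm : 2 ≤ m) (K : ℕ) (hK : 2 ≤ K)
    (z : Fin K → ℝ) (hz : z ∈ NablaK K) :
    |BKphi K α θ m z -
        ((m * (m - 1) / 2) * (phiK K (m - 1) z - phiK K m z)
          - (m / 2) * (θ * phiK K m z + α * phiK K (m - 1) z))|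
      ≤ (m / 2) * (θ + α) / ((K : ℝ) - 1)
        + (m / 2) * α * (1 + 2 * Real.exp 2) * (K : ℝ)
          * ((m - 1) / ((K : ℝ) + m - 1)) ^ (m - 1) := by
  obtain ⟨⟨hz0, hzsum⟩, -⟩ := hz
  have hz1 : ∀ i, z i ≤ 1 := by
    intro i
    have := Finset.single_le_sum (f := z) (fun j _ => hz0 j) (Finset.mem_univ i)
    linarith [hzsum ▸ this]
  have hK2 : (2:ℝ) ≤ (K:ℝ) := by exact_mod_cast hK
  have hK1pos : (0:ℝ) < (K:ℝ) - 1 := by linarith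
  have hKpos : (0:ℝ) < (K:ℝ) := by linarith
  have hm1 : (1:ℝ) ≤ m - 1 := by linarith
  have hmpos : (0:ℝ) < m := by linarith
  have hq : (0:ℝ) < θ + α := by linarith
  set M : ℝ := ((m - 1) / ((K : ℝ) + m - 1)) ^ (m - 1) with hM_def
  have hMnn : 0 ≤ M := Real.rpow_nonneg (div_nonneg (by linarith) (by linarith)) _
  -- pointwise facts
  have hp : ∀ i, z i ^ (m-1) * z i = z i ^ m := by
    intro i
    rcases eq_or_lt_of_le (hz0 i) with h | h
    · rw [← h]
      rw [Real.zero_rpow (by intro hc; rw [sub_eq_zero] at hc; linarith),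
        Real.zero_rpow (by intro hc; linarith), zero_mul]
    · rw [← Real.rpow_add_one (ne_of_gt h) (m-1)]
      congr 1
      ring
  have hzmnn : ∀ i, 0 ≤ z i ^ (m-1) := fun i => Real.rpow_nonneg (hz0 i) _
  have hzmle : ∀ i, z i ^ (m-1) ≤ z i := by
    intro i
    rcases eq_or_lt_of_le (hz0 i) with h | h
    · rw [← h, Real.zero_rpow (by intro hc; rw [sub_eq_zero] at hc; linarith)]
    · calc z i ^ (m-1) ≤ z i ^ (1:ℝ) :=
            Real.rpow_le_rpow_of_exponent_ge h (hz1 i) (by linarith)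
        _ = z i := Real.rpow_one _
  have hgeom : ∀ i, z i ^ (m-1) * (1 - z i) ^ K ≤ M := by
    intro i
    have := geom_bound (m-1) K hm1 (by omega) (hz0 i) (hz1 i)
    rw [hM_def, show (K:ℝ) + m - 1 = (m-1) + (K:ℝ) by ring]
    exact this
  have hrz : ∀ j, z j * rfun K (z j) = (1 - z j) - (1 - z j)^(K+1) := by
    intro j
    unfold rfun
    split_ifs with h
    · simp [h]
    · rw [pow_succ]
      field_simp
  have hsum1 : ∑ j, (1 - z j) = (K:ℝ) - 1 := by
    rw [Finset.sum_sub_distrib, hzsum, Finset.sum_const, Finset.card_univ, Fintype.card_fin,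
      nsmul_eq_mul, mul_one]
  -- the key sums
  set T := ∑ i, z i ^ (m-1) * (1 - z i) with hT_def
  set S := ∑ j, z j * rfun K (z j) with hS_def
  set P := ∑ i, pfun K z i * z i ^ (m-1) with hP_def
  set E := ∑ i, (1 - z i)^(K+1) * z i ^ (m-1) with hE_def
  set R := ∑ i, (z i * rfun K (z i)) * z i ^ (m-1) with hR_def
  set Dn := ∑ l, (1 - z l) ^ K with hDn_def
  have e1 : T = (∑ i, z i ^ (m-1)) - ∑ i, z i ^ m := by
    rw [hT_def, ← Finset.sum_sub_distrib]
    exact Finset.sum_congr rfl fun i _ => by rw [mul_sub, mul_one, hp i]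
  have e2 : R = T - E := by
    rw [hR_def, hT_def, hE_def, ← Finset.sum_sub_distrib]
    exact Finset.sum_congr rfl fun i _ => by rw [hrz i]; ring
  have hbsum : ∑ i, bdrift K α θ z i * z i ^ (m-1)
      = (1/2*((θ+α)/((K:ℝ)-1))) * T - (1/2*(θ+α)) * (∑ i, z i ^ m)
        + (1/2*α*S) * P - (1/2*α) * R := by
    rw [hT_def, hP_def, hR_def]
    calc ∑ i, bdrift K α θ z i * z i ^ (m-1)
        = ∑ i, ((1/2*((θ+α)/((K:ℝ)-1))) * (z i ^ (m-1) * (1 - z i))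
            - (1/2*(θ+α)) * (z i ^ m)
            + (1/2*α*S) * (pfun K z i * z i ^ (m-1))
            - (1/2*α) * ((z i * rfun K (z i)) * z i ^ (m-1))) := by
          refine Finset.sum_congr rfl fun i _ => ?_
          unfold bdrift
          rw [← hS_def, ← hp i]
          ring
      _ = _ := by
          simp only [Finset.sum_sub_distrib, Finset.sum_add_distrib, ← Finset.mul_sum]
  -- the identity
  have hid : BKphi K α θ m z -
        ((m * (m - 1) / 2) * (phiK K (m - 1) z - phiK K m z)
          - (m / 2) * (θ * phiK K m z + α * phiK K (m - 1) z))
      = (m/2) * ((θ+α)/((K:ℝ)-1) * T + α * (S * P + E)) := by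
    unfold BKphi phiK
    rw [← hT_def, hbsum, e2, e1]
    ring
  rw [hid]
  -- bounds on the pieces
  have hTnn : 0 ≤ T := Finset.sum_nonneg fun i _ =>
    mul_nonneg (hzmnn i) (by linarith [hz1 i])
  have hT1 : T ≤ 1 := by
    rw [hT_def]
    calc ∑ i, z i ^ (m-1) * (1 - z i) ≤ ∑ i, z i := by
          refine Finset.sum_le_sum fun i _ => ?_
          calc z i ^ (m-1) * (1 - z i) ≤ z i ^ (m-1) * 1 := by
                have := hz0 i; have := hzmnn i; nlinarith
            _ = z i ^ (m-1) := mul_one _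
            _ ≤ z i := hzmle i
      _ = 1 := hzsum
  have hSnn : 0 ≤ S := Finset.sum_nonneg fun j _ => by
    rw [hrz j]
    have h0 : (0:ℝ) ≤ 1 - z j := by linarith [hz1 j]
    have : (1 - z j)^(K+1) ≤ 1 - z j := pow_le_of_le_one h0 (by linarith [hz0 j]) (by omega)
    linarith
  have hSle : S ≤ (K:ℝ) - 1 := by
    rw [hS_def]
    calc ∑ j, z j * rfun K (z j) = ∑ j, ((1 - z j) - (1 - z j)^(K+1)) :=
          Finset.sum_congr rfl fun j _ => hrz j
      _ ≤ ∑ j, (1 - z j) := by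
          refine Finset.sum_le_sum fun j _ => ?_
          have : (0:ℝ) ≤ (1 - z j)^(K+1) := pow_nonneg (by linarith [hz1 j]) _
          linarith
      _ = (K:ℝ) - 1 := hsum1
  have hEnn : 0 ≤ E := Finset.sum_nonneg fun i _ =>
    mul_nonneg (pow_nonneg (by linarith [hz1 i]) _) (hzmnn i)
  have hEle : E ≤ (K:ℝ) * M := by
    rw [hE_def]
    calc ∑ i, (1 - z i)^(K+1) * z i ^ (m-1) ≤ ∑ _i : Fin K, M := by
          refine Finset.sum_le_sum fun i _ => ?_
          calc (1 - z i)^(K+1) * z i ^ (m-1) ≤ (1 - z i)^K * z i ^ (m-1) := by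
                have h0 : (0:ℝ) ≤ 1 - z i := by linarith [hz1 i]
                have : (1 - z i)^(K+1) ≤ (1 - z i)^K :=
                  pow_le_pow_of_le_one h0 (by linarith [hz0 i]) (by omega)
                exact mul_le_mul_of_nonneg_right this (hzmnn i)
            _ = z i ^ (m-1) * (1 - z i)^K := mul_comm _ _
            _ ≤ M := hgeom i
      _ = (K:ℝ) * M := by
          rw [Finset.sum_const, Finset.card_univ, Fintype.card_fin, nsmul_eq_mul]
  have hDnge : (K:ℝ) * Real.exp (-2) ≤ Dn := by
    have hjen := pow_sum_div_card_le_sum_pow (s := Finset.univ)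
      (f := fun l : Fin K => 1 - z l)
      (fun i _ => by show (0:ℝ) ≤ 1 - z i; linarith [hz1 i]) (K-1)
    rw [show K - 1 + 1 = K from by omega, Finset.card_univ, Fintype.card_fin] at hjen
    have hsum1' : ∑ l : Fin K, (1 - z l) = (K:ℝ) - 1 := hsum1
    rw [hsum1'] at hjen
    have hpow : ((K:ℝ)) ^ K = (K:ℝ) ^ (K-1) * K := by
      rw [← pow_succ, show K - 1 + 1 = K from by omega]
    have heq : ((K:ℝ) - 1) ^ K / (K:ℝ) ^ (K-1) = (K:ℝ) * (((K:ℝ) - 1) / K) ^ K := by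
      rw [div_pow, hpow]
      field_simp
    have hd := denom_bound K hK
    calc (K:ℝ) * Real.exp (-2) ≤ (K:ℝ) * (((K:ℝ) - 1) / K) ^ K :=
          mul_le_mul_of_nonneg_left hd (by positivity)
      _ = ((K:ℝ) - 1) ^ K / (K:ℝ) ^ (K-1) := heq.symm
      _ ≤ Dn := hjen
  have hDnpos : 0 < Dn := lt_of_lt_of_le (by positivity) hDnge
  have hpfun_eq : ∀ i, pfun K z i * z i ^ (m-1) = ((1 - z i)^K * z i ^ (m-1)) / Dn := by
    intro i
    unfold pfun
    rw [← hDn_def]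
    ring
  have hPnn : 0 ≤ P := Finset.sum_nonneg fun i _ => by
    rw [hpfun_eq i]
    exact div_nonneg (mul_nonneg (pow_nonneg (by linarith [hz1 i]) _) (hzmnn i)) hDnpos.le
  have hPle : P ≤ (K:ℝ) * M / Dn := by
    rw [hP_def]
    calc ∑ i, pfun K z i * z i ^ (m-1) ≤ ∑ _i : Fin K, M / Dn := by
          refine Finset.sum_le_sum fun i _ => ?_
          rw [hpfun_eq i]
          gcongr
          rw [mul_comm]
          exact hgeom i
      _ = (K:ℝ) * (M / Dn) := by
          rw [Finset.sum_const, Finset.card_univ, Fintype.card_fin, nsmul_eq_mul]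
      _ = (K:ℝ) * M / Dn := by ring
  have hPle2 : P ≤ M * Real.exp 2 := by
    have h1 : (K:ℝ) * M / Dn ≤ (K:ℝ) * M / ((K:ℝ) * Real.exp (-2)) :=
      div_le_div_of_nonneg_left (by positivity) (by positivity) hDnge
    have h2 : (K:ℝ) * M / ((K:ℝ) * Real.exp (-2)) = M * Real.exp 2 := by
      rw [Real.exp_neg]
      field_simp
    linarith [hPle]
  clear_value M T S P E R Dn
  have hSP : S * P ≤ 2 * Real.exp 2 * ((K:ℝ) * M) := by
    have e2pos := Real.exp_pos 2
    calc S * P ≤ ((K:ℝ) - 1) * (M * Real.exp 2) := by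
          apply mul_le_mul hSle hPle2 hPnn (by linarith)
      _ ≤ 2 * Real.exp 2 * ((K:ℝ) * M) := by
          nlinarith [mul_nonneg (mul_nonneg hMnn e2pos.le) (show (0:ℝ) ≤ (K:ℝ)+1 by linarith)]
  -- final assembly
  have hrhs_nn : 0 ≤ (m/2) * ((θ+α)/((K:ℝ)-1) * T + α * (S * P + E)) := by
    apply mul_nonneg (by linarith)
    apply add_nonneg
    · exact mul_nonneg (div_nonneg hq.le hK1pos.le) hTnn
    · exact mul_nonneg hα0 (add_nonneg (mul_nonneg hSnn hPnn) hEnn)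
  rw [abs_of_nonneg hrhs_nn]
  have hfirst : (m/2) * ((θ+α)/((K:ℝ)-1) * T) ≤ (m / 2) * (θ + α) / ((K : ℝ) - 1) := by
    rw [show (m / 2) * (θ + α) / ((K : ℝ) - 1) = (m/2) * ((θ+α)/((K:ℝ)-1) * 1) by ring]
    apply mul_le_mul_of_nonneg_left ?_ (by linarith)
    apply mul_le_mul_of_nonneg_left hT1 (div_nonneg hq.le hK1pos.le)
  have hsecond : (m/2) * (α * (S * P + E))
      ≤ (m / 2) * α * (1 + 2 * Real.exp 2) * ((K:ℝ) * M) := by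
    have h3 : S * P + E ≤ (1 + 2 * Real.exp 2) * ((K:ℝ) * M) := by nlinarith
    calc (m/2) * (α * (S * P + E)) ≤ (m/2) * (α * ((1 + 2 * Real.exp 2) * ((K:ℝ) * M))) := by
          apply mul_le_mul_of_nonneg_left ?_ (by linarith)
          exact mul_le_mul_of_nonneg_left h3 hα0
      _ = (m / 2) * α * (1 + 2 * Real.exp 2) * ((K:ℝ) * M) := by ring
  calc (m/2) * ((θ+α)/((K:ℝ)-1) * T + α * (S * P + E))
      = (m/2) * ((θ+α)/((K:ℝ)-1) * T) + (m/2) * (α * (S * P + E)) := by ring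
    _ ≤ (m / 2) * (θ + α) / ((K : ℝ) - 1)
        + (m / 2) * α * (1 + 2 * Real.exp 2) * ((K:ℝ) * M) := add_le_add hfirst hsecond
    _ = (m / 2) * (θ + α) / ((K : ℝ) - 1)
        + (m / 2) * α * (1 + 2 * Real.exp 2) * (K : ℝ) * M := by ring


lemma part2calc (α θ : ℝ) (hα0 : 0 ≤ α) (hθ : -α < θ) (ε : ℝ) (hε0 : 0 < ε) (hε1 : ε < 1)
    (m : ℝ) (hm : 2 + ε ≤ m) (K : ℕ) (hK : 2 ≤ K) :
    (m / 2) * (θ + α) / ((K : ℝ) - 1)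
      + (m / 2) * α * (1 + 2 * Real.exp 2) * (K : ℝ)
        * ((m - 1) / ((K : ℝ) + m - 1)) ^ (m - 1)
    ≤ (m * (θ + α) + (m / 2) * α * (1 + 2 * Real.exp 2) * (m - 1) ^ (1 + ε))
      * (K : ℝ) ^ (-ε) := by
  have hK2 : (2:ℝ) ≤ (K:ℝ) := by exact_mod_cast hK
  have hKpos : (0:ℝ) < (K:ℝ) := by linarith
  have hK1pos : (0:ℝ) < (K:ℝ) - 1 := by linarith
  have hm2 : (2:ℝ) ≤ m := by linarith
  have hq : (0:ℝ) < θ + α := by linarith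
  have hm1pos : (0:ℝ) < m - 1 := by linarith
  have hKe : (K:ℝ) ^ (-(1:ℝ)) ≤ (K:ℝ) ^ (-ε) :=
    Real.rpow_le_rpow_of_exponent_le (by linarith) (by linarith)
  have hKe1 : (K:ℝ) ^ (-(1:ℝ)) = 1 / (K:ℝ) := by
    rw [Real.rpow_neg_one, one_div]
  have hA : (m / 2) * (θ + α) / ((K : ℝ) - 1) ≤ m * (θ + α) * (K:ℝ) ^ (-ε) := by
    have h1 : (m / 2) * (θ + α) / ((K : ℝ) - 1) ≤ m * (θ + α) / (K:ℝ) := by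
      rw [div_le_div_iff₀ hK1pos hKpos]
      nlinarith [mul_nonneg (mul_nonneg (show (0:ℝ) ≤ m by linarith) hq.le)
        (show (0:ℝ) ≤ (K:ℝ) - 2 by linarith)]
    have h2 : m * (θ + α) / (K:ℝ) = m * (θ + α) * ((K:ℝ) ^ (-(1:ℝ))) := by
      rw [hKe1]; ring
    have h3 : m * (θ + α) * ((K:ℝ) ^ (-(1:ℝ))) ≤ m * (θ + α) * (K:ℝ) ^ (-ε) :=
      mul_le_mul_of_nonneg_left hKe (by nlinarith)
    linarith
  have hKM : (K:ℝ) * ((m - 1) / ((K : ℝ) + m - 1)) ^ (m - 1)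
      ≤ (m - 1) ^ (1 + ε) * (K:ℝ) ^ (-ε) := by
    set x : ℝ := (m - 1) / ((K : ℝ) + m - 1) with hx_def
    have hxpos : 0 < x := by
      apply div_pos hm1pos; linarith
    have hx1 : x ≤ 1 := by
      rw [hx_def, div_le_one (by linarith)]; linarith
    have h1 : x ^ (m - 1) ≤ x ^ (1 + ε) :=
      Real.rpow_le_rpow_of_exponent_ge hxpos hx1 (by linarith)
    have h2 : x ≤ (m - 1) / (K:ℝ) := by
      rw [hx_def]
      exact div_le_div_of_nonneg_left hm1pos.le hKpos (by linarith)
    have h3 : x ^ (1 + ε) ≤ ((m - 1) / (K:ℝ)) ^ (1 + ε) :=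
      Real.rpow_le_rpow hxpos.le h2 (by linarith)
    have h4 : ((m - 1) / (K:ℝ)) ^ (1 + ε) = (m - 1) ^ (1 + ε) / (K:ℝ) ^ (1 + ε) :=
      Real.div_rpow hm1pos.le hKpos.le _
    have h5 : (K:ℝ) * ((m - 1) ^ (1 + ε) / (K:ℝ) ^ (1 + ε))
        = (m - 1) ^ (1 + ε) * (K:ℝ) ^ (-ε) := by
      rw [show (-ε) = 1 - (1 + ε) by ring, Real.rpow_sub hKpos, Real.rpow_one]
      ring
    calc (K:ℝ) * x ^ (m - 1) ≤ (K:ℝ) * ((m - 1) ^ (1 + ε) / (K:ℝ) ^ (1 + ε)) := by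
          apply mul_le_mul_of_nonneg_left ?_ hKpos.le
          rw [← h4]; linarith
      _ = (m - 1) ^ (1 + ε) * (K:ℝ) ^ (-ε) := h5
  have hc : (0:ℝ) ≤ (m / 2) * α * (1 + 2 * Real.exp 2) := by
    have := (Real.exp_pos 2).le
    apply mul_nonneg (mul_nonneg (by linarith) hα0) (by linarith)
  have hB : (m / 2) * α * (1 + 2 * Real.exp 2) * (K : ℝ)
        * ((m - 1) / ((K : ℝ) + m - 1)) ^ (m - 1)
      ≤ (m / 2) * α * (1 + 2 * Real.exp 2) * (m - 1) ^ (1 + ε) * (K:ℝ) ^ (-ε) := by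
    calc (m / 2) * α * (1 + 2 * Real.exp 2) * (K : ℝ)
          * ((m - 1) / ((K : ℝ) + m - 1)) ^ (m - 1)
        = (m / 2) * α * (1 + 2 * Real.exp 2)
          * ((K : ℝ) * ((m - 1) / ((K : ℝ) + m - 1)) ^ (m - 1)) := by ring
      _ ≤ (m / 2) * α * (1 + 2 * Real.exp 2) * ((m - 1) ^ (1 + ε) * (K:ℝ) ^ (-ε)) :=
          mul_le_mul_of_nonneg_left hKM hc
      _ = (m / 2) * α * (1 + 2 * Real.exp 2) * (m - 1) ^ (1 + ε) * (K:ℝ) ^ (-ε) := by ring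
  calc (m / 2) * (θ + α) / ((K : ℝ) - 1)
        + (m / 2) * α * (1 + 2 * Real.exp 2) * (K : ℝ)
          * ((m - 1) / ((K : ℝ) + m - 1)) ^ (m - 1)
      ≤ m * (θ + α) * (K:ℝ) ^ (-ε)
        + (m / 2) * α * (1 + 2 * Real.exp 2) * (m - 1) ^ (1 + ε) * (K:ℝ) ^ (-ε) :=
        add_le_add hA hB
    _ = (m * (θ + α) + (m / 2) * α * (1 + 2 * Real.exp 2) * (m - 1) ^ (1 + ε))
        * (K : ℝ) ^ (-ε) := by ring

/-- For every real `m ≥ 2`, every integer `K ≥ 2`, and every `z ∈ ∇_K`,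
`|B_K φ_m(z) − B φ_m(z)|` is bounded by the explicit quantity; in particular, for
fixed `ε ∈ (0,1)` and `m ≥ 2+ε`, the supremum over `z ∈ ∇_K` of this difference is
`O(K^{-ε})` as `K → ∞`. -/
theorem stmt9 (α θ : ℝ) (hα0 : 0 ≤ α) (hα1 : α < 1) (hθ : -α < θ) :
    (∀ (m : ℝ), 2 ≤ m → ∀ K : ℕ, 2 ≤ K → ∀ z ∈ NablaK K,
      |BKphi K α θ m z -
          ((m * (m - 1) / 2) * (phiK K (m - 1) z - phiK K m z)
            - (m / 2) * (θ * phiK K m z + α * phiK K (m - 1) z))|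
        ≤ (m / 2) * (θ + α) / ((K : ℝ) - 1)
          + (m / 2) * α * (1 + 2 * Real.exp 2) * (K : ℝ)
            * ((m - 1) / ((K : ℝ) + m - 1)) ^ (m - 1)) ∧
    (∀ ε : ℝ, 0 < ε → ε < 1 → ∀ (m : ℝ), 2 + ε ≤ m →
      ∃ C : ℝ, ∀ K : ℕ, 2 ≤ K → ∀ z ∈ NablaK K,
        |BKphi K α θ m z -
            ((m * (m - 1) / 2) * (phiK K (m - 1) z - phiK K m z)
              - (m / 2) * (θ * phiK K m z + α * phiK K (m - 1) z))|
          ≤ C * (K : ℝ) ^ (-ε)) := by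
  constructor
  · intro m hm K hK z hz
    exact part1 α θ hα0 hθ m hm K hK z hz
  · intro ε hε0 hε1 m hm
    refine ⟨m * (θ + α) + (m / 2) * α * (1 + 2 * Real.exp 2) * (m - 1) ^ (1 + ε), ?_⟩
    intro K hK z hz
    exact le_trans (part1 α θ hα0 hθ m (by linarith) K hK z hz)
      (part2calc α θ hα0 hθ ε hε0 hε1 m hm K hK)
end

section
/- For every real m with 2 < m < 3, every integer K ≥ 2, and every z ∈ ∇_K, one has B_K(φ_2 − φ_m)(z) ≥ 1 − α − (m(m−1−α)/2)·φ_{m−1}(z) − [(1+θ)·φ_2(z) − (m(m−1+θ)/2)·φ_m(z)] − [3(θ+α)/(2(K−1)) + α(1+2e²)/(2(K+1))], where B_K(φ_2 − φ_m)(z) := B_K φ_2(z) − B_K φ_m(z). -/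
open Finset

lemma zr (K : ℕ) (u : ℝ) : u * rfun K u = (1-u) * (1-(1-u)^K) := by
  unfold rfun
  by_cases h : u = 0
  · simp [h]
  · rw [if_neg h]; field_simp

noncomputable def gAux (K : ℕ) (z : Fin K → ℝ) (i : Fin K) : ℝ :=
  (∑ j, z j * rfun K (z j)) * ((1 - z i) ^ K / ∑ l, (1 - z l) ^ K) + (1 - z i) ^ (K+1)

noncomputable def fAux (m : ℝ) {K : ℕ} (z : Fin K → ℝ) (i : Fin K) : ℝ :=
  2 * z i - m * z i ^ (m-1)

lemma bdrift_mul (K : ℕ) (α θ : ℝ) (z : Fin K → ℝ) (i : Fin K) (F : ℝ) :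
    bdrift K α θ z i * F
      = (1/2) * ((θ+α)/((K:ℝ)-1)) * ((1 - z i) * F) - ((θ+α)/2) * (z i * F)
        + (α/2) * (F * gAux K z i - (1 - z i) * F) := by
  have h : α * z i * rfun K (z i) = α * ((1 - z i) - (1 - z i)^(K+1)) := by
    rw [mul_assoc, zr]; ring
  unfold bdrift pfun gAux
  rw [h]
  ring

lemma aux_sq : ∀ n : ℕ, n^2 * 2^n ≤ 4 * 3^n := by
  intro n
  induction n with
  | zero => norm_num
  | succ k ih =>
    rcases lt_or_ge k 5 with h | h
    · interval_cases k <;> norm_num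
    · have h2 : 2*(k+1)^2 ≤ 3*k^2 := by nlinarith
      calc (k+1)^2 * 2^(k+1) = (2*(k+1)^2) * 2^k := by ring
        _ ≤ (3*k^2) * 2^k := Nat.mul_le_mul_right _ h2
        _ = 3*(k^2*2^k) := by ring
        _ ≤ 3*(4*3^k) := Nat.mul_le_mul_left _ ih
        _ = 4*3^(k+1) := by ring

lemma aux_real1 (K : ℕ) : ((K:ℝ)+1) * (2/5:ℝ)^(K+1) ≤ 1 := by
  have h1 : ((K:ℝ)+1) ≤ 2^(K+1) := by
    have := (Nat.lt_two_pow_self (n := K+1)).le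
    exact_mod_cast this
  have h2 : ((2:ℝ)/5)^(K+1) ≤ (1/2:ℝ)^(K+1) := pow_le_pow_left₀ (by norm_num) (by norm_num) _
  calc ((K:ℝ)+1) * (2/5:ℝ)^(K+1) ≤ 2^(K+1) * (1/2:ℝ)^(K+1) :=
        mul_le_mul h1 h2 (by positivity) (by positivity)
    _ = 1 := by rw [← mul_pow]; norm_num

lemma aux_real2 (K : ℕ) : ((K:ℝ))^2 * (2/3:ℝ)^K ≤ 4 := by
  have h : ((K:ℝ))^2 * 2^K ≤ 4 * 3^K := by exact_mod_cast aux_sq K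
  have h3 : (0:ℝ) < 3^K := by positivity
  rw [div_pow, ← mul_div_assoc, div_le_iff₀ h3]
  linarith


set_option maxHeartbeats 2000000 in
/-- For every real `2 < m < 3`, every integer `K ≥ 2`, and every
`z ∈ ∇_K`, the lower bound on `B_K(φ_2 − φ_m)(z) := B_K φ_2(z) − B_K φ_m(z)` holds. -/
theorem stmt10 (α θ : ℝ) (hα0 : 0 ≤ α) (hα1 : α < 1) (hθ : -α < θ)
    (m : ℝ) (hm2 : 2 < m) (hm3 : m < 3) :
    ∀ K : ℕ, 2 ≤ K → ∀ z ∈ NablaK K,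
      1 - α - (m * (m - 1 - α) / 2) * phiK K (m - 1) z
        - ((1 + θ) * phiK K 2 z - (m * (m - 1 + θ) / 2) * phiK K m z)
        - (3 * (θ + α) / (2 * ((K : ℝ) - 1))
            + α * (1 + 2 * Real.exp 2) / (2 * ((K : ℝ) + 1)))
      ≤ BKphi K α θ 2 z - BKphi K α θ m z := by
  intro K hK z hzmem
  obtain ⟨⟨hz0, hzsum⟩, hzmono⟩ := hzmem
  have hKR : (2:ℝ) ≤ (K:ℝ) := by exact_mod_cast hK
  have hKp : (0:ℝ) < (K:ℝ) + 1 := by linarith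
  have hz1 : ∀ i, z i ≤ 1 := by
    intro i
    have := Finset.single_le_sum (fun j (_ : j ∈ univ) => hz0 j) (mem_univ i)
    linarith [hzsum ▸ this]
  have hpair : ∀ i j : Fin K, i ≠ j → z i + z j ≤ 1 := by
    intro i j hij
    have hsub : ∑ k ∈ ({i,j} : Finset (Fin K)), z k ≤ ∑ k, z k :=
      Finset.sum_le_sum_of_subset_of_nonneg (Finset.subset_univ _) (fun k _ _ => hz0 k)
    rw [Finset.sum_pair hij, hzsum] at hsub
    exact hsub
  -- rpow facts
  have hzpow : ∀ i, z i ^ (m-1) ≤ z i := by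
    intro i
    rcases (hz0 i).eq_or_lt with h | h
    · rw [← h, Real.zero_rpow (by intro hc; linarith)]
    · calc z i ^ (m-1) ≤ z i ^ (1:ℝ) :=
            Real.rpow_le_rpow_of_exponent_ge h (hz1 i) (by linarith)
        _ = z i := Real.rpow_one _
  have hrnn : ∀ i, 0 ≤ z i ^ (m-1) := fun i => Real.rpow_nonneg (hz0 i) _
  have hfl : ∀ i, -(z i) ≤ fAux m z i := by
    intro i
    unfold fAux
    nlinarith [hzpow i, hrnn i, hz0 i]
  -- negative f forces big z
  have hfneg : ∀ i, fAux m z i < 0 → 3/5 < z i := by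
    intro i hfi
    unfold fAux at hfi
    have hzpos : 0 < z i := by
      rcases (hz0 i).eq_or_lt with h | h
      · exfalso
        rw [← h, Real.zero_rpow (by intro hc; linarith)] at hfi
        norm_num at hfi
      · exact h
    have h1 : 2 * z i < m * z i ^ (m-1) := by linarith
    have hsplit : z i ^ (m-1) = z i ^ (m-2) * z i := by
      rw [show m - 1 = (m-2) + 1 by ring, Real.rpow_add hzpos, Real.rpow_one]
    have h2 : 2 < m * z i ^ (m-2) := by
      rw [hsplit] at h1
      have h1' : 2 * z i < (m * z i ^ (m-2)) * z i := by linarith [h1]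
      exact lt_of_mul_lt_mul_right h1' hzpos.le
    have h3 : 2/m < z i ^ (m-2) := by
      rw [div_lt_iff₀ (by linarith : (0:ℝ) < m)]
      linarith
    have h4 : Real.log (2/m) < (m-2) * Real.log (z i) := by
      have := Real.log_lt_log (by positivity) h3
      rwa [Real.log_rpow hzpos] at this
    have h5 : Real.log (m/2) ≤ m/2 - 1 := Real.log_le_sub_one_of_pos (by linarith)
    have h6 : Real.log (2/m) = -Real.log (m/2) := by rw [← Real.log_inv, inv_div]
    have h7 : -(1/2:ℝ) < Real.log (z i) := by
      by_contra hc
      push_neg at hc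
      have := mul_le_mul_of_nonneg_left hc (by linarith : (0:ℝ) ≤ m - 2)
      linarith
    have h8 : Real.exp (-(1/2:ℝ)) < z i := by
      calc Real.exp (-(1/2:ℝ)) < Real.exp (Real.log (z i)) := Real.exp_lt_exp.mpr h7
        _ = z i := Real.exp_log hzpos
    have h9 : (3/5:ℝ) < Real.exp (-(1/2:ℝ)) := by
      have hsq : Real.exp (1/2:ℝ) * Real.exp (1/2:ℝ) = Real.exp 1 := by
        rw [← Real.exp_add]; norm_num
      have he : Real.exp (1/2:ℝ) < 5/3 := by
        nlinarith [Real.exp_pos (1/2:ℝ), Real.exp_one_lt_d9]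
      calc (3/5:ℝ) = ((5/3:ℝ))⁻¹ := by norm_num
        _ < (Real.exp (1/2:ℝ))⁻¹ := (inv_lt_inv₀ (by norm_num) (Real.exp_pos _)).mpr he
        _ = Real.exp (-(1/2:ℝ)) := (Real.exp_neg _).symm
    linarith
  -- positivity of P and S
  have hPnn : ∀ l, (0:ℝ) ≤ (1 - z l)^K := fun l => pow_nonneg (by linarith [hz1 l]) K
  have hSnn : (0:ℝ) ≤ ∑ j, z j * rfun K (z j) := by
    apply Finset.sum_nonneg
    intro j _
    rw [zr]
    have h1 : (1 - z j)^K ≤ 1 := pow_le_one₀ (by linarith [hz1 j]) (by linarith [hz0 j])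
    nlinarith [hz1 j]
  have hSle : (∑ j, z j * rfun K (z j)) ≤ (K:ℝ) - 1 := by
    have h1 : ∀ j ∈ univ, z j * rfun K (z j) ≤ 1 - z j := by
      intro j _
      rw [zr]
      nlinarith [hz1 j, hPnn j]
    calc (∑ j, z j * rfun K (z j)) ≤ ∑ j : Fin K, (1 - z j) := Finset.sum_le_sum h1
      _ = (K:ℝ) - 1 := by
          rw [Finset.sum_sub_distrib, hzsum]
          simp
  have hgnn : ∀ i, 0 ≤ gAux K z i := by
    intro i
    unfold gAux
    have hP : (0:ℝ) ≤ ∑ l, (1 - z l)^K := Finset.sum_nonneg fun l _ => hPnn l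
    have h1 : (0:ℝ) ≤ (1 - z i)^(K+1) := pow_nonneg (by linarith [hz1 i]) _
    have h2 : (0:ℝ) ≤ (1 - z i)^K / ∑ l, (1 - z l)^K := div_nonneg (hPnn i) hP
    nlinarith [mul_nonneg hSnn h2]
  -- KEY inequality
  have hG : -(5/((K:ℝ)+1)) ≤ ∑ i, fAux m z i * gAux K z i := by
    by_cases hneg : ∀ i, 0 ≤ fAux m z i
    · have h1 : (0:ℝ) ≤ ∑ i, fAux m z i * gAux K z i :=
        Finset.sum_nonneg fun i _ => mul_nonneg (hneg i) (hgnn i)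
      have : (0:ℝ) ≤ 5/((K:ℝ)+1) := by positivity
      linarith
    · push_neg at hneg
      obtain ⟨i₀, hi₀⟩ := hneg
      have hz₀ : 3/5 < z i₀ := hfneg i₀ hi₀
      have hothers : ∀ i, i ≠ i₀ → 0 ≤ fAux m z i := by
        intro i hne
        by_contra h
        push_neg at h
        have := hfneg i h
        have := hpair i i₀ hne
        linarith
      have hsplit : fAux m z i₀ * gAux K z i₀ + ∑ i ∈ univ.erase i₀, fAux m z i * gAux K z i
          = ∑ i, fAux m z i * gAux K z i :=
        Finset.add_sum_erase univ (fun i => fAux m z i * gAux K z i) (mem_univ i₀)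
      have herase : 0 ≤ ∑ i ∈ univ.erase i₀, fAux m z i * gAux K z i :=
        Finset.sum_nonneg fun i hi =>
          mul_nonneg (hothers i (Finset.ne_of_mem_erase hi)) (hgnn i)
      have hg2 : gAux K z i₀ ≤ 5/((K:ℝ)+1) := by
        obtain ⟨j, hj⟩ : ∃ j : Fin K, j ≠ i₀ := by
          apply Fintype.exists_ne_of_one_lt_card
          simpa using (by omega : 1 < K)
        have hzj : z i₀ ≤ 1 - z j := by have := hpair j i₀ hj; linarith
        have hPz : z i₀ ^ K ≤ ∑ l, (1 - z l)^K := by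
          calc z i₀ ^ K ≤ (1 - z j)^K := pow_le_pow_left₀ (by linarith) hzj K
            _ ≤ ∑ l, (1 - z l)^K :=
                Finset.single_le_sum (fun l (_ : l ∈ univ) => hPnn l) (mem_univ j)
        have hz₀pos : (0:ℝ) < z i₀ := by linarith
        have hz₀Kpos : (0:ℝ) < z i₀ ^ K := by positivity
        have hPs : (0:ℝ) ≤ ∑ l, (1 - z l)^K := Finset.sum_nonneg fun l _ => hPnn l
        have hrat : (1 - z i₀)^K / (∑ l, (1 - z l)^K) ≤ (2/3:ℝ)^K := by
          calc (1 - z i₀)^K / (∑ l, (1 - z l)^K) ≤ (1 - z i₀)^K / z i₀ ^ K := by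
                apply div_le_div_of_nonneg_left (hPnn i₀) hz₀Kpos hPz
            _ = ((1 - z i₀)/z i₀)^K := by rw [div_pow]
            _ ≤ (2/3:ℝ)^K := by
                apply pow_le_pow_left₀ (div_nonneg (by linarith [hz1 i₀]) hz₀pos.le)
                rw [div_le_iff₀ hz₀pos]
                linarith
        have hterm1 : (∑ j, z j * rfun K (z j)) * ((1 - z i₀)^K / (∑ l, (1 - z l)^K))
            ≤ ((K:ℝ)-1) * (2/3:ℝ)^K := by
          apply mul_le_mul hSle hrat (div_nonneg (hPnn i₀) hPs) (by linarith)
        have hterm1' : ((K:ℝ)-1) * (2/3:ℝ)^K ≤ 4/((K:ℝ)+1) := by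
          rw [le_div_iff₀ hKp]
          nlinarith [aux_real2 K, pow_nonneg (by norm_num : (0:ℝ) ≤ 2/3) K]
        have hterm2 : (1 - z i₀)^(K+1) ≤ (2/5:ℝ)^(K+1) :=
          pow_le_pow_left₀ (by linarith [hz1 i₀]) (by linarith) _
        have hterm2' : ((2:ℝ)/5)^(K+1) ≤ 1/((K:ℝ)+1) := by
          rw [le_div_iff₀ hKp]
          linarith [aux_real1 K]
        unfold gAux
        have : 4/((K:ℝ)+1) + 1/((K:ℝ)+1) = 5/((K:ℝ)+1) := by ring
        linarith
      have h1 : -(gAux K z i₀) ≤ fAux m z i₀ * gAux K z i₀ := by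
        calc -(gAux K z i₀) = -1 * gAux K z i₀ := by ring
          _ ≤ -(z i₀) * gAux K z i₀ :=
              mul_le_mul_of_nonneg_right (by linarith [hz1 i₀]) (hgnn i₀)
          _ ≤ fAux m z i₀ * gAux K z i₀ :=
              mul_le_mul_of_nonneg_right (hfl i₀) (hgnn i₀)
      linarith
  -- rpow product identities
  have hz2 : ∀ i, z i ^ (2:ℝ) = z i * z i := by
    intro i
    rw [show (2:ℝ) = (1:ℝ) + 1 by norm_num, Real.rpow_add' (hz0 i) (by norm_num),
      Real.rpow_one]
  have hzm' : ∀ i, z i ^ m = z i ^ (m-1) * z i := by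
    intro i
    have h1 : z i ^ ((m-1) + 1) = z i ^ (m-1) * z i ^ (1:ℝ) :=
      Real.rpow_add' (hz0 i) (by intro hc; linarith)
    rw [Real.rpow_one] at h1
    rw [show (m-1)+1 = m by ring] at h1
    exact h1
  -- sum identities
  have hsum1 : ∑ i, z i * (1 - z i) = 1 - phiK K 2 z := by
    unfold phiK
    have h1 : ∀ i ∈ univ, z i * (1 - z i) = z i - z i ^ (2:ℝ) := by
      intro i _
      rw [hz2 i]; ring
    rw [Finset.sum_congr rfl h1, Finset.sum_sub_distrib, hzsum]
  have hsum2 : ∑ i, z i ^ (m-1) * (1 - z i) = phiK K (m-1) z - phiK K m z := by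
    unfold phiK
    have h1 : ∀ i ∈ univ, z i ^ (m-1) * (1 - z i) = z i ^ (m-1) - z i ^ m := by
      intro i _
      rw [hzm' i]; ring
    rw [Finset.sum_congr rfl h1, Finset.sum_sub_distrib]
  have hA : ∑ i, (1 - z i) * fAux m z i
      = 2 - 2 * phiK K 2 z - m * phiK K (m-1) z + m * phiK K m z := by
    have h1 : ∀ i ∈ univ, (1 - z i) * fAux m z i
        = (2 * z i - 2 * z i ^ (2:ℝ)) - (m * z i ^ (m-1) - m * z i ^ m) := by
      intro i _
      unfold fAux
      rw [hz2 i, hzm' i]; ring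
    rw [Finset.sum_congr rfl h1, Finset.sum_sub_distrib, Finset.sum_sub_distrib,
      Finset.sum_sub_distrib, ← Finset.mul_sum, ← Finset.mul_sum, ← Finset.mul_sum,
      ← Finset.mul_sum, hzsum]
    unfold phiK
    ring
  have hB : ∑ i, z i * fAux m z i = 2 * phiK K 2 z - m * phiK K m z := by
    have h1 : ∀ i ∈ univ, z i * fAux m z i = 2 * z i ^ (2:ℝ) - m * z i ^ m := by
      intro i _
      unfold fAux
      rw [hz2 i, hzm' i]; ring
    rw [Finset.sum_congr rfl h1, Finset.sum_sub_distrib, ← Finset.mul_sum, ← Finset.mul_sum]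
    unfold phiK
    ring
  have hAlb : -3 ≤ ∑ i, (1 - z i) * fAux m z i := by
    have h1 : ∀ i ∈ univ, -(z i) ≤ (1 - z i) * fAux m z i := by
      intro i _
      rcases le_or_gt 0 (fAux m z i) with h | h
      · have := mul_nonneg (by linarith [hz1 i] : (0:ℝ) ≤ 1 - z i) h
        linarith [hz0 i]
      · have h3 := mul_le_mul_of_nonpos_right (by linarith [hz0 i] : (1 - z i) ≤ 1) h.le
        have := hfl i
        nlinarith
    have h2 := Finset.sum_le_sum h1
    rw [Finset.sum_neg_distrib, hzsum] at h2
    linarith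
  -- main decomposition of the sum of b_i * f_i
  have hSb : ∑ i, bdrift K α θ z i * fAux m z i
      = (1/2) * ((θ+α)/((K:ℝ)-1)) * (∑ i, (1 - z i) * fAux m z i)
        - ((θ+α)/2) * (∑ i, z i * fAux m z i)
        + (α/2) * ((∑ i, fAux m z i * gAux K z i) - ∑ i, (1 - z i) * fAux m z i) := by
    have e1 : (α/2) * ((∑ i, fAux m z i * gAux K z i) - ∑ i, (1 - z i) * fAux m z i)
        = ∑ i, (α/2) * (fAux m z i * gAux K z i - (1 - z i) * fAux m z i) := by
      rw [← Finset.sum_sub_distrib, Finset.mul_sum]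
    have e2 : (1/2) * ((θ+α)/((K:ℝ)-1)) * (∑ i, (1 - z i) * fAux m z i)
        = ∑ i, (1/2) * ((θ+α)/((K:ℝ)-1)) * ((1 - z i) * fAux m z i) :=
      Finset.mul_sum _ _ _
    have e3 : ((θ+α)/2) * (∑ i, z i * fAux m z i) = ∑ i, ((θ+α)/2) * (z i * fAux m z i) :=
      Finset.mul_sum _ _ _
    rw [e1, e2, e3, ← Finset.sum_sub_distrib, ← Finset.sum_add_distrib]
    exact Finset.sum_congr rfl fun i _ => bdrift_mul K α θ z i (fAux m z i)
  -- expressing the difference of generators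
  have hbf : ∑ i, bdrift K α θ z i * fAux m z i
      = 2 * (∑ i, bdrift K α θ z i * z i ^ ((2:ℝ)-1))
        - m * ∑ i, bdrift K α θ z i * z i ^ (m-1) := by
    rw [Finset.mul_sum, Finset.mul_sum, ← Finset.sum_sub_distrib]
    refine Finset.sum_congr rfl fun i _ => ?_
    unfold fAux
    rw [show (2:ℝ)-1 = 1 by norm_num, Real.rpow_one]
    ring
  have hdiff : BKphi K α θ 2 z - BKphi K α θ m z
      = (1 - phiK K 2 z) - (m*(m-1)/2) * (phiK K (m-1) z - phiK K m z)
        + ∑ i, bdrift K α θ z i * fAux m z i := by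
    unfold BKphi
    rw [hbf]
    have h21 : ∑ i, z i ^ ((2:ℝ)-1) * (1 - z i) = 1 - phiK K 2 z := by
      rw [show (2:ℝ)-1 = 1 by norm_num]
      simp only [Real.rpow_one]
      exact hsum1
    rw [h21, hsum2]
    ring
  rw [hdiff, hSb, hA, hB]
  -- final bounds
  have hc1 : 0 ≤ (1/2) * ((θ+α)/((K:ℝ)-1)) := by
    have : (0:ℝ) < θ + α := by linarith
    have : (0:ℝ) < (K:ℝ) - 1 := by linarith
    positivity
  have h1 : -(3*(θ+α)/(2*((K:ℝ)-1)))
      ≤ (1/2) * ((θ+α)/((K:ℝ)-1)) * (2 - 2 * phiK K 2 z - m * phiK K (m-1) z + m * phiK K m z) := by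
    have hb := mul_le_mul_of_nonneg_left hAlb hc1
    have hKne : ((K:ℝ)-1) ≠ 0 := by intro hc; linarith
    have he : -(3*(θ+α)/(2*((K:ℝ)-1))) = (1/2) * ((θ+α)/((K:ℝ)-1)) * (-3) := by
      field_simp
    rw [he]
    rw [hA] at hb
    exact hb
  have h2 : -(α*(1+2*Real.exp 2)/(2*((K:ℝ)+1)))
      ≤ (α/2) * (∑ i, fAux m z i * gAux K z i) := by
    have e5 : (5:ℝ) ≤ 1 + 2*Real.exp 2 := by nlinarith [Real.add_one_le_exp (2:ℝ)]
    have hb := mul_le_mul_of_nonneg_left hG (by linarith : (0:ℝ) ≤ α/2)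
    have h3 : α*5 ≤ α*(1+2*Real.exp 2) := mul_le_mul_of_nonneg_left e5 hα0
    have h4 : α*5/(2*((K:ℝ)+1)) ≤ α*(1+2*Real.exp 2)/(2*((K:ℝ)+1)) := by
      have hden : (0:ℝ) < 2*((K:ℝ)+1) := by linarith
      exact (div_le_div_iff_of_pos_right hden).mpr h3
    have hKne2 : ((K:ℝ)+1) ≠ 0 := by intro hc; linarith
    have he2 : α/2 * (-(5/((K:ℝ)+1))) = -(α*5/(2*((K:ℝ)+1))) := by
      field_simp
    linarith
  linarith [h1, h2]
end

section
/- For every u ∈ [0,1], 1 − u − u·r(u) = (1−u)^{K+1}. Moreover, for every real m with 2 < m < 3, every integer K ≥ 2, and every z ∈ ∇_K, the remainder R_{K,m}(z) := ∑_{i=1}^K (1 − z_i − z_i r_i(z))·z_i·(1 − (m/2) z_i^{m−2}) + (∑_{j=1}^K z_j r_j(z))·∑_{i=1}^K p_i(z)·z_i·(1 − (m/2) z_i^{m−2}) satisfies R_{K,m}(z) ≥ −(1+2e²)/(2(K+1)). -/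
open Finset

lemma part1_s11 (K : ℕ) (u : ℝ) :
    1 - u - u * rfun K u = (1 - u) ^ (K + 1) := by
  unfold rfun
  split_ifs with h
  · simp [h]
  · have h2 : u * ((1 - u) * (1 - (1 - u) ^ K) / u) = (1 - u) * (1 - (1 - u) ^ K) := by
      field_simp
    rw [h2, pow_succ]
    ring

lemma aux_pow23 : ∀ K : ℕ, 2 ≤ K → ((K:ℝ)+1) * (2/3)^K ≤ 3 := by
  intro K hK
  induction K, hK using Nat.le_induction with
  | base => norm_num
  | succ n hn ih =>
    have h1 : (0:ℝ) ≤ (2/3:ℝ)^n := by positivity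
    have h2 : (2/3:ℝ)^n ≤ 1 := pow_le_one₀ (by norm_num) (by norm_num)
    have hn' : (2:ℝ) ≤ n := by exact_mod_cast hn
    push_cast
    rw [pow_succ]
    nlinarith [ih]

lemma paren_lb (m u : ℝ) (hm2 : 2 < m) (hm3 : m < 3) (hu0 : 0 ≤ u) (hu1 : u ≤ 1) :
    -(1/2) ≤ 1 - m/2 * u ^ (m-2) := by
  have h1 : u ^ (m-2) ≤ 1 := Real.rpow_le_one hu0 hu1 (by linarith)
  have h2 : 0 ≤ u ^ (m-2) := Real.rpow_nonneg hu0 _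
  nlinarith

lemma paren_neg (m u : ℝ) (hm2 : 2 < m) (hm3 : m < 3) (hu0 : 0 ≤ u)
    (hneg : 1 - m/2 * u ^ (m-2) < 0) : Real.exp (-(1/2)) < u := by
  by_contra h
  push_neg at h
  have h1 : u ^ (m-2) ≤ (Real.exp (-(1/2))) ^ (m-2) :=
    Real.rpow_le_rpow hu0 h (by linarith)
  have h2 : (Real.exp (-(1/2))) ^ (m-2) = Real.exp (-(1/2) * (m-2)) := by
    rw [Real.rpow_def_of_pos (Real.exp_pos _), Real.log_exp]
  have h3 : m/2 ≤ Real.exp ((m-2)/2) := by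
    have := Real.add_one_le_exp ((m-2)/2)
    linarith
  have h4 : Real.exp (-(1/2) * (m-2)) * Real.exp ((m-2)/2) = 1 := by
    rw [← Real.exp_add]; ring_nf; exact Real.exp_zero
  have hep : 0 < Real.exp ((m-2)/2) := Real.exp_pos _
  have h5 : m/2 * u ^ (m-2) ≤ 1 := by
    calc m/2 * u ^ (m-2) ≤ Real.exp ((m-2)/2) * Real.exp (-(1/2)*(m-2)) := by
          apply mul_le_mul h3 (h1.trans h2.le) (Real.rpow_nonneg hu0 _) hep.le
      _ = 1 := by rw [mul_comm]; exact h4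
  linarith

lemma exp_neg_half_gt : (3/5:ℝ) < Real.exp (-(1/2)) := by
  have h : Real.exp (1/2) < 5/3 := by
    nlinarith [Real.exp_one_lt_d9, Real.exp_pos (1/2:ℝ), Real.exp_add (1/2:ℝ) (1/2)]
  have h2 : Real.exp (-(1/2)) * Real.exp (1/2) = 1 := by
    rw [← Real.exp_add]; norm_num
  nlinarith [Real.exp_pos (-(1/2):ℝ), Real.exp_pos (1/2:ℝ)]

set_option maxHeartbeats 1000000 in
/-- For every `u ∈ [0,1]`, `1 − u − u·r(u) = (1−u)^{K+1}`.  Moreover, for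
every real `2 < m < 3`, integer `K ≥ 2`, and `z ∈ ∇_K`, the remainder `R_{K,m}(z)`
satisfies `R_{K,m}(z) ≥ −(1+2e²)/(2(K+1))`. -/
theorem stmt11 (K : ℕ) (hK : 2 ≤ K) :
    (∀ u ∈ Set.Icc (0 : ℝ) 1, 1 - u - u * rfun K u = (1 - u) ^ (K + 1)) ∧
    (∀ (m : ℝ), 2 < m → m < 3 → ∀ z ∈ NablaK K,
      -((1 + 2 * Real.exp 2) / (2 * ((K : ℝ) + 1))) ≤
        (∑ i, (1 - z i - z i * rfun K (z i)) * z i * (1 - (m / 2) * z i ^ (m - 2)))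
        + (∑ j, z j * rfun K (z j))
            * ∑ i, pfun K z i * z i * (1 - (m / 2) * z i ^ (m - 2))) := by
  constructor
  · exact fun u _ => part1_s11 K u
  intro m hm2 hm3 z hz
  obtain ⟨⟨hz0, hzsum⟩, hord⟩ := hz
  have hKR : (2:ℝ) ≤ (K:ℝ) := by exact_mod_cast hK
  have hz1 : ∀ i, z i ≤ 1 := by
    intro i
    have h := Finset.single_le_sum (f := z) (fun j _ => hz0 j) (Finset.mem_univ i)
    rw [hzsum] at h; exact h
  have hpart1 : ∀ i, 1 - z i - z i * rfun K (z i) = (1 - z i)^(K+1) :=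
    fun i => part1_s11 K (z i)
  -- bounds on z*r
  have hzr0 : ∀ i, 0 ≤ z i * rfun K (z i) := by
    intro i
    have e := hpart1 i
    have h1 : (1 - z i)^(K+1) ≤ 1 - z i := by
      apply pow_le_of_le_one (by linarith [hz1 i]) (by linarith [hz0 i]) (Nat.succ_ne_zero K)
    linarith
  have hzr1 : ∀ i, z i * rfun K (z i) ≤ 1 := by
    intro i
    have e := hpart1 i
    have h1 : 0 ≤ (1 - z i)^(K+1) := pow_nonneg (by linarith [hz1 i]) _
    linarith [hz0 i]
  set S := ∑ j, z j * rfun K (z j) with hSdef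
  have hS0 : 0 ≤ S := Finset.sum_nonneg fun j _ => hzr0 j
  have hSK : S ≤ (K:ℝ) := by
    calc S ≤ ∑ _j : Fin K, (1:ℝ) := Finset.sum_le_sum fun j _ => hzr1 j
      _ = (K:ℝ) := by simp
  -- denominator positive
  have hD : 0 < ∑ l, (1 - z l)^K := by
    have hmin : ∃ l, z l ≤ 1/2 := by
      by_contra hc
      push_neg at hc
      have hne : (Finset.univ : Finset (Fin K)).Nonempty := by
        rw [Finset.univ_nonempty_iff]
        exact Fin.pos_iff_nonempty.1 (by omega)
      have hlt : ∑ _i : Fin K, (1/2:ℝ) < ∑ i, z i :=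
        Finset.sum_lt_sum_of_nonempty hne fun i _ => hc i
      rw [hzsum] at hlt
      simp only [Finset.sum_const, Finset.card_univ, Fintype.card_fin, nsmul_eq_mul] at hlt
      nlinarith
    obtain ⟨l, hl⟩ := hmin
    have h1 : (1/2:ℝ)^K ≤ (1 - z l)^K := pow_le_pow_left₀ (by norm_num) (by linarith) K
    have h2 := Finset.single_le_sum (f := fun l => (1 - z l)^K)
      (fun j _ => pow_nonneg (by linarith [hz1 j]) K) (Finset.mem_univ l)
    have h3 : (0:ℝ) < (1/2:ℝ)^K := by positivity
    linarith
  have hp0 : ∀ i, 0 ≤ pfun K z i := fun i =>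
    div_nonneg (pow_nonneg (by linarith [hz1 i]) K) hD.le
  have hT_lb : ∀ i, -(1/2) ≤ z i * (1 - m/2 * z i ^ (m-2)) := by
    intro i
    have h1 := paren_lb m (z i) hm2 hm3 (hz0 i) (hz1 i)
    have h2 : 0 ≤ z i ^ (m-2) := Real.rpow_nonneg (hz0 i) _
    nlinarith [hz0 i, hz1 i]
  have hbpos : (0:ℝ) < (1 + 2*Real.exp 2)/(2*((K:ℝ)+1)) := by positivity
  by_cases hex : ∃ i, z i * (1 - m/2 * z i ^ (m-2)) < 0
  case neg =>
    push_neg at hex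
    have hA : 0 ≤ ∑ i, (1 - z i - z i * rfun K (z i)) * z i * (1 - m/2 * z i ^ (m-2)) :=
      Finset.sum_nonneg fun i _ => by
        rw [hpart1 i, mul_assoc]
        exact mul_nonneg (pow_nonneg (by linarith [hz1 i]) _) (hex i)
    have hB : 0 ≤ ∑ i, pfun K z i * z i * (1 - m/2 * z i ^ (m-2)) :=
      Finset.sum_nonneg fun i _ => by
        rw [mul_assoc]
        exact mul_nonneg (hp0 i) (hex i)
    nlinarith [mul_nonneg hS0 hB]
  case pos =>
    obtain ⟨i0, hi0⟩ := hex
    have hparen : 1 - m/2 * z i0 ^ (m-2) < 0 := by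
      by_contra hc
      push_neg at hc
      exact absurd (mul_nonneg (hz0 i0) hc) (not_le.2 hi0)
    have hw : Real.exp (-(1/2)) < z i0 := paren_neg m (z i0) hm2 hm3 (hz0 i0) hparen
    have hw35 : (3/5:ℝ) < z i0 := lt_trans exp_neg_half_gt hw
    have hother : ∀ i, i ≠ i0 → z i ≤ 1 - z i0 := by
      intro i hi
      have h1 : z i + ∑ j ∈ Finset.univ.erase i, z j = 1 := by
        rw [Finset.add_sum_erase _ z (Finset.mem_univ i)]; exact hzsum
      have h2 : z i0 ≤ ∑ j ∈ Finset.univ.erase i, z j :=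
        Finset.single_le_sum (fun j _ => hz0 j)
          (Finset.mem_erase.2 ⟨hi.symm, Finset.mem_univ i0⟩)
      linarith
    have hTnn : ∀ i, i ≠ i0 → 0 ≤ z i * (1 - m/2 * z i ^ (m-2)) := by
      intro i hi
      by_contra hc
      push_neg at hc
      have hp : 1 - m/2 * z i ^ (m-2) < 0 := by
        by_contra hc2
        push_neg at hc2
        exact absurd (mul_nonneg (hz0 i) hc2) (not_le.2 hc)
      have h1 := paren_neg m (z i) hm2 hm3 (hz0 i) hp
      have h2 := exp_neg_half_gt
      have h3 := hother i hi
      linarith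
    -- bound (1/2)^(K+1) ≤ 1/(K+1)
    have hpow_half : ((1:ℝ)/2)^(K+1) ≤ 1/((K:ℝ)+1) := by
      have h : ((K:ℝ)+1) < 2^(K+1) := by
        exact_mod_cast Nat.lt_two_pow_self (n := K+1)
      rw [div_pow, one_pow]
      exact one_div_le_one_div_of_le (by positivity) h.le
    -- bound on A
    have hA : -(1/(2*((K:ℝ)+1))) ≤
        ∑ i, (1 - z i - z i * rfun K (z i)) * z i * (1 - m/2 * z i ^ (m-2)) := by
      have hsplit : (∑ i ∈ Finset.univ.erase i0,
            (1 - z i - z i * rfun K (z i)) * z i * (1 - m/2 * z i ^ (m-2)))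
          + (1 - z i0 - z i0 * rfun K (z i0)) * z i0 * (1 - m/2 * z i0 ^ (m-2))
          = ∑ i, (1 - z i - z i * rfun K (z i)) * z i * (1 - m/2 * z i ^ (m-2)) :=
        Finset.sum_erase_add _ _ (Finset.mem_univ i0)
      have herase : 0 ≤ ∑ i ∈ Finset.univ.erase i0,
          (1 - z i - z i * rfun K (z i)) * z i * (1 - m/2 * z i ^ (m-2)) :=
        Finset.sum_nonneg fun i hi => by
          rw [hpart1 i, mul_assoc]
          exact mul_nonneg (pow_nonneg (by linarith [hz1 i]) _)
            (hTnn i (Finset.mem_erase.1 hi).1)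
      have hfi0 : -(1/(2*((K:ℝ)+1))) ≤
          (1 - z i0 - z i0 * rfun K (z i0)) * z i0 * (1 - m/2 * z i0 ^ (m-2)) := by
        rw [hpart1 i0, mul_assoc]
        have ha0 : 0 ≤ (1 - z i0)^(K+1) := pow_nonneg (by linarith [hz1 i0]) _
        have ha1 : (1 - z i0)^(K+1) ≤ ((1:ℝ)/2)^(K+1) :=
          pow_le_pow_left₀ (by linarith [hz1 i0]) (by linarith) _
        have ht := hT_lb i0
        have hx := mul_le_mul_of_nonneg_left ht ha0
        have hy : (1/2) * (1/((K:ℝ)+1)) = 1/(2*((K:ℝ)+1)) :=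
          one_div_mul_one_div (2:ℝ) ((K:ℝ)+1)
        linarith [ha1.trans hpow_half]
      linarith
    -- bound on S * B
    have hSB : -(Real.exp 2/((K:ℝ)+1)) ≤
        S * ∑ i, pfun K z i * z i * (1 - m/2 * z i ^ (m-2)) := by
      set B := ∑ i, pfun K z i * z i * (1 - m/2 * z i ^ (m-2)) with hBdef
      have hsplit : (∑ i ∈ Finset.univ.erase i0,
            pfun K z i * z i * (1 - m/2 * z i ^ (m-2)))
          + pfun K z i0 * z i0 * (1 - m/2 * z i0 ^ (m-2)) = B :=
        Finset.sum_erase_add _ _ (Finset.mem_univ i0)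
      have herase : 0 ≤ ∑ i ∈ Finset.univ.erase i0,
          pfun K z i * z i * (1 - m/2 * z i ^ (m-2)) :=
        Finset.sum_nonneg fun i hi => by
          rw [mul_assoc]
          exact mul_nonneg (hp0 i) (hTnn i (Finset.mem_erase.1 hi).1)
      have hfB : pfun K z i0 * (z i0 * (1 - m/2 * z i0 ^ (m-2))) ≤ B := by
        rw [← mul_assoc]; linarith
      -- bound the denominator from below
      have hDlb : ((K:ℝ)-1) * z i0 ^ K ≤ ∑ l ∈ Finset.univ.erase i0, (1 - z l)^K := by
        have hcard : (Finset.univ.erase i0).card = K - 1 := by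
          rw [Finset.card_erase_of_mem (Finset.mem_univ i0), Finset.card_univ,
            Fintype.card_fin]
        have h := Finset.card_nsmul_le_sum (Finset.univ.erase i0)
          (fun l => (1 - z l)^K) (z i0 ^ K)
          (fun l hl => pow_le_pow_left₀ (hz0 i0)
            (by linarith [hother l (Finset.mem_erase.1 hl).1]) K)
        rw [hcard, nsmul_eq_mul] at h
        have hc : ((K - 1 : ℕ) : ℝ) = (K:ℝ) - 1 := by
          have : 1 ≤ K := by omega
          push_cast [Nat.cast_sub this]
          ring
        rwa [hc] at h
      have hD2 : ((K:ℝ)-1) * z i0 ^ K ≤ ∑ l, (1 - z l)^K := by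
        have hsplitD : (∑ l ∈ Finset.univ.erase i0, (1 - z l)^K) + (1 - z i0)^K
            = ∑ l, (1 - z l)^K := Finset.sum_erase_add _ _ (Finset.mem_univ i0)
        have : (0:ℝ) ≤ (1 - z i0)^K := pow_nonneg (by linarith [hz1 i0]) _
        linarith
      have hzKpos : (0:ℝ) < z i0 ^ K := pow_pos (by linarith) K
      have hdenpos : (0:ℝ) < ((K:ℝ)-1) * z i0 ^ K := by nlinarith
      have hpbound : pfun K z i0 ≤ (1 - z i0)^K / (((K:ℝ)-1) * z i0 ^ K) := by
        unfold pfun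
        exact div_le_div_of_nonneg_left (pow_nonneg (by linarith [hz1 i0]) _) hdenpos hD2
      -- rho bound
      have hrho0 : (0:ℝ) ≤ (1 - z i0)/ z i0 :=
        div_nonneg (by linarith [hz1 i0]) (by linarith)
      have hrho : (1 - z i0)/ z i0 ≤ 2/3 := by
        rw [div_le_iff₀ (by linarith : (0:ℝ) < z i0)]
        linarith
      have hrhoK : ((1 - z i0)/ z i0)^K ≤ (2/3:ℝ)^K := pow_le_pow_left₀ hrho0 hrho K
      have h23 : (2/3:ℝ)^K ≤ 3/((K:ℝ)+1) := by
        rw [le_div_iff₀ (by positivity : (0:ℝ) < (K:ℝ)+1)]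
        have := aux_pow23 K hK
        linarith
      have hexp2 : (3:ℝ) ≤ Real.exp 2 := by
        nlinarith [Real.add_one_le_exp (2:ℝ)]
      have hpeq : (1 - z i0)^K / (((K:ℝ)-1) * z i0 ^ K)
          = ((1 - z i0)/ z i0)^K / ((K:ℝ)-1) := by
        rw [div_pow, div_div, mul_comm ((K:ℝ)-1)]
      have hKm1 : (1:ℝ) ≤ (K:ℝ) - 1 := by linarith
      have hEpos : (0:ℝ) < Real.exp 2 := Real.exp_pos 2
      have hp_le : pfun K z i0 ≤ Real.exp 2/(((K:ℝ)+1)*((K:ℝ)-1)) := by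
        rw [hpeq] at hpbound
        calc pfun K z i0 ≤ ((1 - z i0)/ z i0)^K / ((K:ℝ)-1) := hpbound
          _ ≤ (Real.exp 2/((K:ℝ)+1)) / ((K:ℝ)-1) := by
              gcongr
              exact (hrhoK.trans h23).trans (by gcongr)
          _ = Real.exp 2/(((K:ℝ)+1)*((K:ℝ)-1)) := by
              rw [div_div]
      -- assemble
      have h1 : S * (pfun K z i0 * (z i0 * (1 - m/2 * z i0 ^ (m-2)))) ≤ S * B :=
        mul_le_mul_of_nonneg_left hfB hS0
      have h2 : -(1/2) * pfun K z i0 ≤ pfun K z i0 * (z i0 * (1 - m/2 * z i0 ^ (m-2))) := by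
        nlinarith [hp0 i0, hT_lb i0]
      have h3 : S * (-(1/2) * pfun K z i0) ≤
          S * (pfun K z i0 * (z i0 * (1 - m/2 * z i0 ^ (m-2)))) :=
        mul_le_mul_of_nonneg_left h2 hS0
      have h4 : S * pfun K z i0 ≤ (K:ℝ) * pfun K z i0 :=
        mul_le_mul_of_nonneg_right hSK (hp0 i0)
      have h5 : (K:ℝ) * pfun K z i0 ≤ (K:ℝ) * (Real.exp 2/(((K:ℝ)+1)*((K:ℝ)-1))) :=
        mul_le_mul_of_nonneg_left hp_le (by positivity)
      have h6 : (1/2) * ((K:ℝ) * (Real.exp 2/(((K:ℝ)+1)*((K:ℝ)-1))))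
          ≤ Real.exp 2/((K:ℝ)+1) := by
        have hne1 : ((K:ℝ)+1) ≠ 0 := by positivity
        have hne2 : ((K:ℝ)-1) ≠ 0 := ne_of_gt (by linarith)
        have he : (1/2) * ((K:ℝ) * (Real.exp 2 / (((K:ℝ)+1)*((K:ℝ)-1))))
            = ((K:ℝ)/(2*((K:ℝ)-1))) * (Real.exp 2/((K:ℝ)+1)) := by
          field_simp
        rw [he]
        have hq : (0:ℝ) ≤ Real.exp 2/((K:ℝ)+1) := by positivity
        have hle1 : (K:ℝ)/(2*((K:ℝ)-1)) ≤ 1 := by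
          rw [div_le_one (by linarith : (0:ℝ) < 2*((K:ℝ)-1))]
          linarith
        nlinarith [hq, hle1]
      nlinarith [h1, h3, h4, h5, h6]
    -- combine
    have heq : (1 + 2*Real.exp 2)/(2*((K:ℝ)+1))
        = 1/(2*((K:ℝ)+1)) + Real.exp 2/((K:ℝ)+1) := by
      field_simp
    linarith [hA, hSB]
end

section
/- Let N be a positive integer. For z ∈ Δ_K define z_i^* := z_i + p_i(z)·m̄(z) − z_i·m_i(z) with m_i(z) := α r_i(z)/(2N) and m̄(z) := ∑_{j=1}^K z_j m_j(z), and then z_i^{**} := z_i^* + ∑_{j≠i} z_j^* u − (K−1)u·z_i^*, where u := (θ+α)/(2N(K−1)). Then for every z ∈ Δ_K and every i ∈ {1,…,K}, |N(z_i^{**} − z_i) − b_i(z)| ≤ α(θ+α)K² / (4N(K−1)). In particular z_i^{**} = z_i + N^{−1} b_i(z) + O(N^{−2}) uniformly in z ∈ Δ_K. -/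
open Finset

set_option maxHeartbeats 1000000

/-- The post-migration frequencies `z_i^* = z_i + p_i(z)·m̄(z) − z_i·m_i(z)`, where
`m_i(z) = α r_i(z)/(2N)` and `m̄(z) = ∑_j z_j m_j(z)`. -/
noncomputable def zstar (K N : ℕ) (α : ℝ) (z : Fin K → ℝ) (i : Fin K) : ℝ :=
  z i + pfun K z i * (∑ j, z j * (α * rfun K (z j) / (2 * (N : ℝ))))
    - z i * (α * rfun K (z i) / (2 * (N : ℝ)))

/-- The post-mutation frequencies
`z_i^{**} = z_i^* + ∑_{j≠i} z_j^* u − (K−1)u·z_i^*` with `u = (θ+α)/(2N(K−1))`. -/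
noncomputable def zstarstar (K N : ℕ) (α θ : ℝ) (z : Fin K → ℝ) (i : Fin K) : ℝ :=
  zstar K N α z i
    + (∑ j ∈ Finset.univ.erase i, zstar K N α z j)
        * ((θ + α) / (2 * (N : ℝ) * ((K : ℝ) - 1)))
    - ((K : ℝ) - 1) * ((θ + α) / (2 * (N : ℝ) * ((K : ℝ) - 1))) * zstar K N α z i

lemma rfun_nonneg (K : ℕ) {u : ℝ} (h0 : 0 ≤ u) (h1 : u ≤ 1) : 0 ≤ rfun K u := by
  unfold rfun
  split_ifs with h
  · positivity
  · have hu : 0 < u := lt_of_le_of_ne h0 (Ne.symm h)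
    have h2 : (1 - u) ^ K ≤ 1 := pow_le_one₀ (by linarith) (by linarith)
    exact div_nonneg (mul_nonneg (by linarith) (by linarith)) hu.le

lemma rfun_le (K : ℕ) {u : ℝ} (h0 : 0 ≤ u) (h1 : u ≤ 1) : rfun K u ≤ K := by
  unfold rfun
  split_ifs with h
  · exact le_refl _
  · have hu : 0 < u := lt_of_le_of_ne h0 (Ne.symm h)
    rw [div_le_iff₀ hu]
    have hbern : 1 - (K : ℝ) * u ≤ (1 - u) ^ K := by
      have h := one_add_mul_le_pow (by linarith : (-2:ℝ) ≤ -u) K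
      rw [show (1:ℝ) + -u = 1 - u by ring] at h
      linarith
    have h2 : (1 - u) ^ K ≤ 1 := pow_le_one₀ (by linarith) (by linarith)
    nlinarith [mul_nonneg hu.le (sub_nonneg.mpr h2)]

lemma key_alg (N K α θ zi P R ri zs zss : ℝ) (hN : N ≠ 0) (hK : K - 1 ≠ 0)
    (hzs : zs = zi + P * (α * R / (2 * N)) - zi * (α * ri / (2 * N)))
    (hzss : zss = zs + (1 - zs) * ((θ + α) / (2 * N * (K - 1)))
      - (K - 1) * ((θ + α) / (2 * N * (K - 1))) * zs) :
    N * (zss - zi)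
      - (1 / 2) * ((θ + α) * (1 - zi) / (K - 1) - (θ + α) * zi + α * P * R - α * zi * ri)
      = α * (θ + α) * K / (4 * N * (K - 1)) * (zi * ri - P * R) := by
  subst hzss hzs
  field_simp
  ring

/-- For every `z ∈ Δ_K` and every `i`,
`|N(z_i^{**} − z_i) − b_i(z)| ≤ α(θ+α)K²/(4N(K−1))`; in particular
`z_i^{**} = z_i + N^{-1} b_i(z) + O(N^{-2})` uniformly in `z ∈ Δ_K`. -/
theorem stmt14 (K : ℕ) (hK : 2 ≤ K) (α θ : ℝ) (hα0 : 0 ≤ α) (hα1 : α < 1)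
    (hθ : -α < θ) (N : ℕ) (hN : 0 < N) :
    ∀ z ∈ DeltaK K, ∀ i : Fin K,
      |(N : ℝ) * (zstarstar K N α θ z i - z i) - bdrift K α θ z i|
        ≤ α * (θ + α) * (K : ℝ) ^ 2 / (4 * (N : ℝ) * ((K : ℝ) - 1)) := by
  intro z hz i
  obtain ⟨hz0, hz1⟩ := hz
  have hK2 : (2:ℝ) ≤ (K:ℝ) := by exact_mod_cast hK
  have hK1 : (0:ℝ) < (K:ℝ) - 1 := by linarith
  have hNpos : (0:ℝ) < (N:ℝ) := by exact_mod_cast hN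
  have hθα : 0 < θ + α := by linarith
  have hzle1 : ∀ j, z j ≤ 1 := by
    intro j
    calc z j ≤ ∑ l, z l := Finset.single_le_sum (fun l _ => hz0 l) (Finset.mem_univ j)
    _ = 1 := hz1
  have hex : ∃ j : Fin K, z j < 1 := by
    by_contra hcon
    push_neg at hcon
    have h : (K:ℝ) ≤ ∑ l, z l := by
      calc (K:ℝ) = ∑ _l : Fin K, (1:ℝ) := by simp
      _ ≤ ∑ l, z l := Finset.sum_le_sum (fun l _ => hcon l)
    rw [hz1] at h; linarith
  obtain ⟨j0, hj0⟩ := hex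
  have hSpos : 0 < ∑ l, (1 - z l) ^ K := by
    apply Finset.sum_pos' (fun l _ => pow_nonneg (by linarith [hzle1 l]) K)
    exact ⟨j0, Finset.mem_univ j0, pow_pos (by linarith) K⟩
  have hpsum : ∑ j, pfun K z j = 1 := by
    unfold pfun
    rw [← Finset.sum_div, div_self hSpos.ne']
  set R : ℝ := ∑ j, z j * rfun K (z j) with hRdef
  have hM : ∑ j, z j * (α * rfun K (z j) / (2 * (N:ℝ))) = α * R / (2 * (N:ℝ)) := by
    rw [hRdef, Finset.mul_sum, Finset.sum_div]
    exact Finset.sum_congr rfl (fun j _ => by ring)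
  have hzs_sum : ∑ j, zstar K N α z j = 1 := by
    unfold zstar
    rw [Finset.sum_sub_distrib, Finset.sum_add_distrib, ← Finset.sum_mul, hpsum, hz1, hM, one_mul]
    ring
  have herase : ∑ j ∈ Finset.univ.erase i, zstar K N α z j = 1 - zstar K N α z i := by
    have h := Finset.sum_erase_add Finset.univ (zstar K N α z) (Finset.mem_univ i)
    rw [hzs_sum] at h
    linarith
  have hzs : zstar K N α z i
      = z i + pfun K z i * (α * R / (2 * (N:ℝ))) - z i * (α * rfun K (z i) / (2 * (N:ℝ))) := by
    unfold zstar
    rw [hM]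
  have hzss : zstarstar K N α θ z i
      = zstar K N α z i
        + (1 - zstar K N α z i) * ((θ + α) / (2 * (N:ℝ) * ((K:ℝ) - 1)))
        - ((K:ℝ) - 1) * ((θ + α) / (2 * (N:ℝ) * ((K:ℝ) - 1))) * zstar K N α z i := by
    unfold zstarstar
    rw [herase]
  have hb : bdrift K α θ z i
      = (1 / 2) * ((θ + α) * (1 - z i) / ((K:ℝ) - 1) - (θ + α) * z i
          + α * pfun K z i * R - α * z i * rfun K (z i)) := rfl
  have hkey : (N : ℝ) * (zstarstar K N α θ z i - z i) - bdrift K α θ z i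
      = α * (θ + α) * (K:ℝ) / (4 * (N:ℝ) * ((K:ℝ) - 1))
          * (z i * rfun K (z i) - pfun K z i * R) := by
    rw [hb]
    exact key_alg (N:ℝ) (K:ℝ) α θ (z i) (pfun K z i) R (rfun K (z i))
      (zstar K N α z i) (zstarstar K N α θ z i) hNpos.ne' hK1.ne' hzs hzss
  have hri0 : 0 ≤ rfun K (z i) := rfun_nonneg K (hz0 i) (hzle1 i)
  have hriK : rfun K (z i) ≤ K := rfun_le K (hz0 i) (hzle1 i)
  have hR0 : 0 ≤ R :=
    Finset.sum_nonneg (fun j _ => mul_nonneg (hz0 j) (rfun_nonneg K (hz0 j) (hzle1 j)))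
  have hRK : R ≤ K := by
    calc R ≤ ∑ j, z j * (K:ℝ) :=
          Finset.sum_le_sum (fun j _ =>
            mul_le_mul_of_nonneg_left (rfun_le K (hz0 j) (hzle1 j)) (hz0 j))
    _ = K := by rw [← Finset.sum_mul, hz1, one_mul]
  have hP0 : 0 ≤ pfun K z i :=
    div_nonneg (pow_nonneg (by linarith [hzle1 i]) K) hSpos.le
  have hP1 : pfun K z i ≤ 1 := by
    unfold pfun
    rw [div_le_one hSpos]
    refine Finset.single_le_sum (f := fun l => (1 - z l) ^ K) ?_ (Finset.mem_univ i)
    intro l _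
    exact pow_nonneg (by linarith [hzle1 l]) K
  have hx : |z i * rfun K (z i) - pfun K z i * R| ≤ K := by
    have h1 : z i * rfun K (z i) ≤ K := by nlinarith [hz0 i, hzle1 i]
    have h2 : 0 ≤ z i * rfun K (z i) := mul_nonneg (hz0 i) hri0
    have h3 : pfun K z i * R ≤ K := by nlinarith
    have h4 : 0 ≤ pfun K z i * R := mul_nonneg hP0 hR0
    rw [abs_le]
    constructor <;> linarith
  have hd : (0:ℝ) < 4 * (N:ℝ) * ((K:ℝ) - 1) := by nlinarith
  have hc0 : 0 ≤ α * (θ + α) * (K:ℝ) / (4 * (N:ℝ) * ((K:ℝ) - 1)) :=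
    div_nonneg (mul_nonneg (mul_nonneg hα0 hθα.le) (by linarith)) hd.le
  rw [hkey, abs_mul, abs_of_nonneg hc0]
  calc α * (θ + α) * (K:ℝ) / (4 * (N:ℝ) * ((K:ℝ) - 1))
        * |z i * rfun K (z i) - pfun K z i * R|
      ≤ α * (θ + α) * (K:ℝ) / (4 * (N:ℝ) * ((K:ℝ) - 1)) * K :=
        mul_le_mul_of_nonneg_left hx hc0
    _ = α * (θ + α) * (K : ℝ) ^ 2 / (4 * (N : ℝ) * ((K : ℝ) - 1)) := by ring
end

section
/- The power sums separate the points of the Kingman simplex: if z, z′ ∈ ∇̄_∞ satisfy φ_m(z) = φ_m(z′) for every integer m ≥ 2, then z = z′. (This is the separation property underlying the density in C(∇̄_∞) of the algebra generated by 1 and φ_2, φ_3, …, via the Stone–Weierstrass theorem.) -/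
open Finset

lemma ks_pow_summable (z : ℕ → ℝ) (h0 : ∀ i, 0 ≤ z i) (h1 : ∀ i, z i ≤ 1)
    (hs : Summable z) (m : ℕ) (hm : 2 ≤ m) : Summable (fun i => z i ^ m) := by
  refine Summable.of_nonneg_of_le (fun i => pow_nonneg (h0 i) m) (fun i => ?_) hs
  exact pow_le_of_le_one (h0 i) (h1 i) (by omega)

lemma ks_head_le (z z' : ℕ → ℝ)
    (hz0 : ∀ i, 0 ≤ z i) (hz1 : ∀ i, z i ≤ 1) (hzs : Summable z)
    (hz0' : ∀ i, 0 ≤ z' i)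
    (hmono' : ∀ i j : ℕ, i ≤ j → z' j ≤ z' i)
    (hsum' : Summable z') (ht' : ∑' i, z' i ≤ 1)
    (h : ∀ m : ℕ, 2 ≤ m → (∑' i, z i ^ m) = (∑' i, z' i ^ m)) :
    z 0 ≤ z' 0 := by
  by_contra hlt
  push_neg at hlt
  set a := z 0 with ha_def
  set a' := z' 0 with ha'_def
  have ha : 0 < a := lt_of_le_of_lt (hz0' 0) hlt
  have key : ∀ m : ℕ, 2 ≤ m → a ^ m ≤ a' ^ (m - 1) := by
    intro m hm
    have hc : (0:ℝ) ≤ a' ^ (m - 1) := pow_nonneg (hz0' 0) _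
    have hb : ∀ i, z' i ^ m ≤ z' i * a' ^ (m - 1) := by
      intro i
      have h1 : z' i ^ m = z' i * z' i ^ (m - 1) := by
        conv_lhs => rw [show m = (m - 1) + 1 by omega]
        rw [pow_succ']
      rw [h1]
      exact mul_le_mul_of_nonneg_left
        (pow_le_pow_left₀ (hz0' i) (hmono' 0 i (Nat.zero_le i)) _) (hz0' i)
    have hsmul : Summable (fun i => z' i * a' ^ (m - 1)) := hsum'.mul_right _
    have hspow' : Summable (fun i => z' i ^ m) :=
      Summable.of_nonneg_of_le (fun i => pow_nonneg (hz0' i) m) hb hsmul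
    have hspow : Summable (fun i => z i ^ m) := ks_pow_summable z hz0 hz1 hzs m hm
    have h1 : a ^ m ≤ ∑' i, z i ^ m :=
      Summable.le_tsum hspow 0 (fun i _ => pow_nonneg (hz0 i) m)
    have h2 : (∑' i, z' i ^ m) ≤ ∑' i, z' i * a' ^ (m - 1) :=
      Summable.tsum_le_tsum hb hspow' hsmul
    have h3 : (∑' i, z' i * a' ^ (m - 1)) = (∑' i, z' i) * a' ^ (m - 1) :=
      tsum_mul_right
    have h4 : (∑' i, z' i) * a' ^ (m - 1) ≤ 1 * a' ^ (m - 1) :=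
      mul_le_mul_of_nonneg_right ht' hc
    rw [h m hm] at h1
    linarith
  rcases eq_or_lt_of_le (hz0' 0) with heq | hpos
  · have h2 := key 2 le_rfl
    rw [pow_one] at h2
    nlinarith [h2, ha, heq.symm]
  · have hr : 1 < a / a' := (one_lt_div hpos).mpr hlt
    obtain ⟨n, hn⟩ := pow_unbounded_of_one_lt (a'⁻¹) hr
    set m := n + 2 with hm_def
    have hrm : a'⁻¹ < (a / a') ^ m := by
      refine lt_of_lt_of_le hn (pow_le_pow_right₀ (le_of_lt hr) (by omega))
    have hkey := key m (by omega)
    have hapow : (0:ℝ) < a' ^ m := pow_pos hpos m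
    have h5 : a'⁻¹ * a' ^ m < ((a / a') ^ m) * a' ^ m :=
      mul_lt_mul_of_pos_right hrm hapow
    have h6 : a'⁻¹ * a' ^ m = a' ^ (m - 1) := by
      rw [show m = (m - 1) + 1 by omega, pow_succ']
      field_simp
      rw [Nat.add_sub_cancel, mul_div_cancel_left₀ _ (ne_of_gt hpos : a' ≠ 0)]
    have h7 : ((a / a') ^ m) * a' ^ m = a ^ m := by
      rw [div_pow]
      field_simp
    rw [h6, h7] at h5
    linarith

lemma ks_aux (n : ℕ) : ∀ z z' : ℕ → ℝ,
    (∀ i, 0 ≤ z i) → (∀ i, z i ≤ 1) → (∀ i j : ℕ, i ≤ j → z j ≤ z i) →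
    Summable z → (∑' i, z i) ≤ 1 →
    (∀ i, 0 ≤ z' i) → (∀ i, z' i ≤ 1) → (∀ i j : ℕ, i ≤ j → z' j ≤ z' i) →
    Summable z' → (∑' i, z' i) ≤ 1 →
    (∀ m : ℕ, 2 ≤ m → (∑' i, z i ^ m) = (∑' i, z' i ^ m)) →
    z n = z' n := by
  induction n with
  | zero =>
    intro z z' h0 h1 h2 h3 h4 h0' h1' h2' h3' h4' h
    exact le_antisymm
      (ks_head_le z z' h0 h1 h3 h0' h2' h3' h4' h)
      (ks_head_le z' z h0' h1' h3' h0 h2 h3 h4 (fun m hm => (h m hm).symm))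
  | succ n ih =>
    intro z z' h0 h1 h2 h3 h4 h0' h1' h2' h3' h4' h
    have hhead : z 0 = z' 0 :=
      le_antisymm
        (ks_head_le z z' h0 h1 h3 h0' h2' h3' h4' h)
        (ks_head_le z' z h0' h1' h3' h0 h2 h3 h4 (fun m hm => (h m hm).symm))
    have hs : Summable (fun i => z (i + 1)) := (summable_nat_add_iff 1).mpr h3
    have hs' : Summable (fun i => z' (i + 1)) := (summable_nat_add_iff 1).mpr h3'
    have hdec : (∑ i ∈ range 1, z i) + (∑' i, z (i + 1)) = ∑' i, z i :=
      Summable.sum_add_tsum_nat_add 1 h3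
    have hdec' : (∑ i ∈ range 1, z' i) + (∑' i, z' (i + 1)) = ∑' i, z' i :=
      Summable.sum_add_tsum_nat_add 1 h3'
    simp only [range_one, sum_singleton] at hdec hdec'
    have hpoweq : ∀ m : ℕ, 2 ≤ m →
        (∑' i, z (i + 1) ^ m) = (∑' i, z' (i + 1) ^ m) := by
      intro m hm
      have hpz : Summable (fun i => z i ^ m) := ks_pow_summable z h0 h1 h3 m hm
      have hpz' : Summable (fun i => z' i ^ m) := ks_pow_summable z' h0' h1' h3' m hm
      have e1 : (∑ i ∈ range 1, z i ^ m) + (∑' i, z (i + 1) ^ m) = ∑' i, z i ^ m :=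
        Summable.sum_add_tsum_nat_add 1 hpz
      have e2 : (∑ i ∈ range 1, z' i ^ m) + (∑' i, z' (i + 1) ^ m) = ∑' i, z' i ^ m :=
        Summable.sum_add_tsum_nat_add 1 hpz'
      simp only [range_one, sum_singleton] at e1 e2
      have := h m hm
      rw [← e1, ← e2, hhead] at this
      linarith
    exact ih (fun i => z (i + 1)) (fun i => z' (i + 1))
      (fun i => h0 _) (fun i => h1 _) (fun i j hij => h2 _ _ (by omega))
      hs (by have := h0 0; linarith)
      (fun i => h0' _) (fun i => h1' _) (fun i j hij => h2' _ _ (by omega))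
      hs' (by have := h0' 0; linarith)
      hpoweq

/-- The power sums separate the points of the Kingman simplex: if
`z, z′ ∈ ∇̄_∞` satisfy `φ_m(z) = φ_m(z′)` for every integer `m ≥ 2`, then `z = z′`. -/
theorem stmt19 (z z' : ℕ → ℝ) (hz : z ∈ KingmanSimplex) (hz' : z' ∈ KingmanSimplex)
    (h : ∀ m : ℕ, 2 ≤ m → (∑' i, z i ^ m) = (∑' i, z' i ^ m)) :
    z = z' := by
  obtain ⟨h0, h1, h2, h3, h4⟩ := hz
  obtain ⟨h0', h1', h2', h3', h4'⟩ := hz'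
  funext n
  exact ks_aux n z z' h0 h1 h2 h3 h4 h0' h1' h2' h3' h4' h
end
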